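/- arXiv:2011.09179 — 5 statements merged into one kernel-verified Lean document; each statement's English description precedes it below -/
import Mathlib

section
/- Let n ≥ 3 and k₂, k₃, ℓ₂ ≥ 0, ℓ₃ ≥ 1 be integers. Then ℓ₃ · s(n,k₂,k₃,ℓ₂,ℓ₃) = n·(ℓ₂+1) · s(n−1, k₂−1, k₃, ℓ₂+1, ℓ₃−1). -/
/-- A cyclically reduced graph structure on `Fin n`: a permutation `σ` of order dividing 2
(whose fixed points are `a`-loops and whose 2-cycles are isolated `a`-edges) together with a
partial injective map `B` satisfying the triangle condition, such that every vertex is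
`b`-adjacent and the structure is connected. -/
def IsCycRed {n : ℕ} (σ : Equiv.Perm (Fin n)) (B : Fin n → Option (Fin n)) : Prop :=
  (∀ v, σ (σ v) = v) ∧
  (∀ v w u, B v = some u → B w = some u → v = w) ∧
  (∀ v w u, B v = some w → B w = some u → B u = some v) ∧
  (∀ v, B v ≠ none ∨ ∃ u, B u = some v) ∧
  (∀ v w : Fin n, Relation.EqvGen (fun x y => σ x = y ∨ B x = some y) v w)

/-- The structure `(σ, B)` has combinatorial type `(n, k₂, k₃, ℓ₂, ℓ₃)`:
`k₂` isolated `a`-edges, `k₃` isolated `b`-edges, `ℓ₂` `a`-loops, `ℓ₃` `b`-loops. -/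
def HasCombType {n : ℕ} (σ : Equiv.Perm (Fin n)) (B : Fin n → Option (Fin n))
    (k2 k3 l2 l3 : ℕ) : Prop :=
  Nat.card {v : Fin n // σ v ≠ v} = 2 * k2 ∧
  Nat.card {v : Fin n // ∃ w, v ≠ w ∧ B v = some w ∧ B w = none} = k3 ∧
  Nat.card {v : Fin n // σ v = v} = l2 ∧
  Nat.card {v : Fin n // B v = some v} = l3

/-- `s n k₂ k₃ ℓ₂ ℓ₃` is the number of cyclically reduced graph structures on `Fin n`
of combinatorial type `(n, k₂, k₃, ℓ₂, ℓ₃)`, with the convention that `s = 0` if any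
argument is negative. -/
noncomputable def s (n k2 k3 l2 l3 : ℤ) : ℕ :=
  if 0 ≤ n ∧ 0 ≤ k2 ∧ 0 ≤ k3 ∧ 0 ≤ l2 ∧ 0 ≤ l3 then
    Nat.card {p : Equiv.Perm (Fin n.toNat) × (Fin n.toNat → Option (Fin n.toNat)) //
      IsCycRed p.1 p.2 ∧ HasCombType p.1 p.2 k2.toNat k3.toNat l2.toNat l3.toNat}
  else 0

namespace CRAux

lemma nat_card_option (α : Type*) [Finite α] : Nat.card (Option α) = Nat.card α + 1 := by
  letI := Fintype.ofFinite α
  simp [Nat.card_eq_fintype_card]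

lemma nat_card_subtype_add {α : Type*} [Finite α] (p : α → Prop) :
    Nat.card {x // p x} + Nat.card {x // ¬ p x} = Nat.card α := by
  classical
  letI := Fintype.ofFinite α
  rw [Nat.card_eq_fintype_card, Nat.card_eq_fintype_card, Nat.card_eq_fintype_card,
    Fintype.card_subtype_compl]
  exact Nat.add_sub_cancel' (Fintype.card_subtype_le p)

lemma nat_card_sigma_const {ι : Type*} [Finite ι] (F : ι → Type*) [∀ i, Finite (F i)] (c : ℕ)
    (h : ∀ i, Nat.card (F i) = c) : Nat.card (Σ i, F i) = c * Nat.card ι := by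
  classical
  cases nonempty_fintype ι
  letI : ∀ i, Fintype (F i) := fun i => Fintype.ofFinite _
  rw [Nat.card_eq_fintype_card, Nat.card_eq_fintype_card, Fintype.card_sigma]
  have : ∀ i ∈ Finset.univ (α := ι), Fintype.card (F i) = c := by
    intro i _
    rw [← Nat.card_eq_fintype_card, h i]
  rw [Finset.sum_congr rfl this, Finset.sum_const, smul_eq_mul, mul_comm]
  rfl

/-- Puncture a subtype at a distinguished element. -/
def optionPuncture {α : Type*} (p : α → Prop) (a : α) (ha : p a) [DecidableEq α] :
    {x // p x} ≃ Option {x // p x ∧ x ≠ a} where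
  toFun x := if h : x.1 = a then none else some ⟨x.1, x.2, h⟩
  invFun o := o.elim ⟨a, ha⟩ (fun y => ⟨y.1, y.2.1⟩)
  left_inv := by
    rintro ⟨x, hx⟩
    by_cases h : x = a <;> simp [h]
  right_inv := by
    rintro (_ | ⟨y, hy1, hy2⟩)
    · simp
    · simp [hy2]

lemma card_puncture {α : Type*} [Finite α] (p : α → Prop) (a : α) (ha : p a) :
    Nat.card {x // p x} = Nat.card {x // p x ∧ x ≠ a} + 1 := by
  classical
  rw [Nat.card_congr (optionPuncture p a ha), nat_card_option]

/-- Remove the impossible `none` case from a subtype of `Option`. -/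
def optSubEquiv {β : Type*} (P : Option β → Prop) (h : ¬ P none) :
    {o // P o} ≃ {x // P (some x)} where
  toFun o := match o with
    | ⟨none, ho⟩ => absurd ho h
    | ⟨some x, ho⟩ => ⟨x, ho⟩
  invFun x := ⟨some x.1, x.2⟩
  left_inv := by rintro ⟨(_ | x), ho⟩
                 · exact absurd ho h
                 · rfl
  right_inv := fun x => rfl

/-- Transport a subtype across `e : Fin (m+1) ≃ Option (Fin m)` when the
distinguished point does not satisfy the predicate. -/
def transportEquiv {m : ℕ} (e : Fin (m+1) ≃ Option (Fin m)) (P : Fin (m+1) → Prop)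
    (h : ¬ P (e.symm none)) : {u // P u} ≃ {x : Fin m // P (e.symm (some x))} :=
  (e.subtypeEquiv (fun u => by rw [Equiv.symm_apply_apply])).trans
    (optSubEquiv (fun o => P (e.symm o)) h)

lemma card_transport {m : ℕ} (e : Fin (m+1) ≃ Option (Fin m)) (P : Fin (m+1) → Prop)
    (Q : Fin m → Prop) (h : ¬ P (e.symm none)) (hQ : ∀ x, Q x ↔ P (e.symm (some x))) :
    Nat.card {u // P u} = Nat.card {x // Q x} := by
  rw [Nat.card_congr (transportEquiv e P h)]
  exact Nat.card_congr (Equiv.subtypeEquivRight (fun x => (hQ x).symm))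



/-- A vertex carrying a `b`-loop cannot be an `a`-loop (when there are at least 2 vertices). -/
lemma bloop_moves {n : ℕ} {σ : Equiv.Perm (Fin n)} {B : Fin n → Option (Fin n)}
    (hn : 2 ≤ n) (h : IsCycRed σ B) {v : Fin n} (hv : B v = some v) : σ v ≠ v := by
  intro hfix
  obtain ⟨hσ, hinj, htri, hadj, hconn⟩ := h
  have hcard : 1 < Fintype.card (Fin n) := by rw [Fintype.card_fin]; omega
  obtain ⟨u, hu⟩ := Fintype.exists_ne_of_one_lt_card hcard v
  have key : ∀ a b, Relation.EqvGen (fun x y => σ x = y ∨ B x = some y) a b → (a = v ↔ b = v) := by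
    intro a b hab
    induction hab with
    | rel x y hxy =>
      rcases hxy with hxy | hxy
      · constructor
        · intro hx; rw [← hxy, hx, hfix]
        · intro hy; rw [hy] at hxy
          have h2 := hσ x
          rw [hxy, hfix] at h2
          exact h2.symm
      · constructor
        · intro hx; rw [hx, hv] at hxy; exact (Option.some_injective _ hxy).symm
        · intro hy; rw [hy] at hxy; exact hinj x v v hxy hv
    | refl => exact Iff.rfl
    | symm _ _ _ ih => exact ih.symm
    | trans _ _ _ _ _ ih1 ih2 => exact ih1.trans ih2
  exact hu ((key u v (hconn u v)).mpr rfl)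

section UpDown

variable {m : ℕ}

/-- Delete the vertex `e.symm none` from a permutation. -/
def down (e : Fin (m+1) ≃ Option (Fin m)) (σ : Equiv.Perm (Fin (m+1))) : Equiv.Perm (Fin m) :=
  Equiv.removeNone (e.symm.trans (σ.trans e))

/-- Insert a new vertex `e.symm none` connected by an `a`-edge to the `a`-loop `w`. -/
def up (e : Fin (m+1) ≃ Option (Fin m)) (σ' : Equiv.Perm (Fin m)) (w : Fin m) :
    Equiv.Perm (Fin (m+1)) :=
  e.trans ((σ'.optionCongr.trans (Equiv.swap none (some w))).trans e.symm)

def downB (e : Fin (m+1) ≃ Option (Fin m)) (B : Fin (m+1) → Option (Fin (m+1))) :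
    Fin m → Option (Fin m) :=
  fun x => (B (e.symm (some x))).bind e

def upB (e : Fin (m+1) ≃ Option (Fin m)) (B' : Fin m → Option (Fin m)) :
    Fin (m+1) → Option (Fin (m+1)) :=
  fun u => (e u).elim (some (e.symm none)) (fun x => (B' x).map (fun y => e.symm (some y)))

variable (e : Fin (m+1) ≃ Option (Fin m))

lemma down_eq (σ : Equiv.Perm (Fin (m+1))) {x y : Fin m}
    (h : σ (e.symm (some x)) = e.symm (some y)) : down e σ x = y := by
  have h1 : (e.symm.trans (σ.trans e)) (some x) = some y := by
    simp [h]
  have h2 := Equiv.removeNone_some (e.symm.trans (σ.trans e)) ⟨y, h1⟩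
  rw [h1] at h2
  exact Option.some_injective _ h2

lemma down_eq_none (σ : Equiv.Perm (Fin (m+1))) {x y : Fin m}
    (h : σ (e.symm (some x)) = e.symm none) (h2 : σ (e.symm none) = e.symm (some y)) :
    down e σ x = y := by
  have h1 : (e.symm.trans (σ.trans e)) (some x) = none := by simp [h]
  have h3 := Equiv.removeNone_none (e.symm.trans (σ.trans e)) h1
  have h4 : (e.symm.trans (σ.trans e)) none = some y := by simp [h2]
  rw [h4] at h3
  exact Option.some_injective _ h3

lemma up_none (σ' : Equiv.Perm (Fin m)) (w : Fin m) :
    up e σ' w (e.symm none) = e.symm (some w) := by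
  simp [up, Equiv.swap_apply_left]

lemma up_w (σ' : Equiv.Perm (Fin m)) {w : Fin m} (hw : σ' w = w) :
    up e σ' w (e.symm (some w)) = e.symm none := by
  simp [up, hw, Equiv.swap_apply_right]

lemma up_some (σ' : Equiv.Perm (Fin m)) {w : Fin m} (hw : σ' w = w) {x : Fin m} (hx : x ≠ w) :
    up e σ' w (e.symm (some x)) = e.symm (some (σ' x)) := by
  have hne : σ' x ≠ w := fun h => hx (σ'.injective (h.trans hw.symm))
  have hs : Equiv.swap (none : Option (Fin m)) (some w) (some (σ' x)) = some (σ' x) :=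
    Equiv.swap_apply_of_ne_of_ne (Option.some_ne_none _) (by simpa using hne)
  simp [up, hs]

lemma downB_some_iff (B : Fin (m+1) → Option (Fin (m+1))) {x y : Fin m} :
    downB e B x = some y ↔ B (e.symm (some x)) = some (e.symm (some y)) := by
  constructor
  · intro h
    unfold downB at h
    cases hB : B (e.symm (some x)) with
    | none => rw [hB] at h; exact absurd h (by simp)
    | some z =>
      rw [hB] at h
      replace h : e z = some y := h
      exact congrArg some (by rw [← h, Equiv.symm_apply_apply])
  · intro h
    unfold downB
    rw [h]
    show e (e.symm (some y)) = some y
    exact e.apply_symm_apply _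

lemma downB_none_cases (B : Fin (m+1) → Option (Fin (m+1))) {x : Fin m}
    (h : downB e B x = none) :
    B (e.symm (some x)) = none ∨ B (e.symm (some x)) = some (e.symm none) := by
  unfold downB at h
  cases hB : B (e.symm (some x)) with
  | none => exact Or.inl rfl
  | some z =>
    right
    rw [hB] at h
    replace h : e z = none := h
    rw [show z = e.symm none from by rw [← h, Equiv.symm_apply_apply]]

lemma downB_none (B : Fin (m+1) → Option (Fin (m+1))) {x : Fin m}
    (h : B (e.symm (some x)) = none) : downB e B x = none := by
  simp [downB, h]

lemma upB_none (B' : Fin m → Option (Fin m)) :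
    upB e B' (e.symm none) = some (e.symm none) := by
  simp [upB]

lemma upB_some (B' : Fin m → Option (Fin m)) (x : Fin m) :
    upB e B' (e.symm (some x)) = (B' x).map (fun y => e.symm (some y)) := by
  simp [upB]

end UpDown

section Del

variable {m : ℕ} (e : Fin (m+1) ≃ Option (Fin m))

lemma eq_symm_none_or (u : Fin (m+1)) : u = e.symm none ∨ ∃ x, u = e.symm (some x) := by
  cases he : e u with
  | none => exact Or.inl (by rw [← Equiv.symm_apply_apply e u, he])
  | some x => exact Or.inr ⟨x, by rw [← Equiv.symm_apply_apply e u, he]⟩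

lemma symm_some_ne (x : Fin m) : e.symm (some x) ≠ e.symm none :=
  fun h => Option.some_ne_none x (e.symm.injective h)

lemma symm_some_inj {x y : Fin m} (h : e.symm (some x) = e.symm (some y)) : x = y :=
  Option.some_injective _ (e.symm.injective h)

variable {σ : Equiv.Perm (Fin (m+1))} {B : Fin (m+1) → Option (Fin (m+1))}

lemma down_wb {wb : Fin m} (hσ : ∀ u, σ (σ u) = u)
    (hwb : σ (e.symm none) = e.symm (some wb)) : down e σ wb = wb :=
  down_eq_none e σ (by rw [← hwb, hσ]) hwb

lemma del_spec (hC : IsCycRed σ B) (hv : B (e.symm none) = some (e.symm none))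
    {wb : Fin m} (hwb : σ (e.symm none) = e.symm (some wb)) :
    IsCycRed (down e σ) (downB e B) := by
  obtain ⟨hσ, hinj, htri, hadj, hconn⟩ := hC
  have hwv : σ (e.symm (some wb)) = e.symm none := by rw [← hwb, hσ]
  have hBv : ∀ u, B u = some (e.symm none) → u = e.symm none :=
    fun u hu => hinj u _ _ hu hv
  have hvB : ∀ u, B (e.symm none) = some u → u = e.symm none :=
    fun u hu => (Option.some_injective _ (hv.symm.trans hu)).symm
  have hsome : ∀ x : Fin m, x ≠ wb → ∃ y, σ (e.symm (some x)) = e.symm (some y) := by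
    intro x hx
    rcases eq_symm_none_or e (σ (e.symm (some x))) with h | ⟨y, hy⟩
    · exfalso
      have h2 : e.symm (some x) = e.symm (some wb) := by rw [← hwb, ← h, hσ]
      exact hx (symm_some_inj e h2)
    · exact ⟨y, hy⟩
  refine ⟨?_, ?_, ?_, ?_, ?_⟩
  · -- involution
    intro x
    by_cases hx : x = wb
    · rw [hx, down_wb e hσ hwb, down_wb e hσ hwb]
    · obtain ⟨y, hy⟩ := hsome x hx
      have h1 : down e σ x = y := down_eq e σ hy
      have h2 : down e σ y = x := down_eq e σ (by rw [← hy, hσ])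
      rw [h1, h2]
  · -- injectivity
    intro x y z hxz hyz
    rw [downB_some_iff] at hxz hyz
    exact symm_some_inj e (hinj _ _ _ hxz hyz)
  · -- triangle
    intro x y z hxy hyz
    rw [downB_some_iff] at hxy hyz ⊢
    exact htri _ _ _ hxy hyz
  · -- adjacency
    intro x
    rcases hadj (e.symm (some x)) with h | ⟨u, hu⟩
    · left
      cases hB : B (e.symm (some x)) with
      | none => exact absurd hB h
      | some z =>
        rcases eq_symm_none_or e z with hz | ⟨y, hy⟩
        · exact absurd (symm_some_ne e x (hBv _ (hz ▸ hB))) (fun h => h)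
        · have : downB e B x = some y := by
            rw [downB_some_iff, hB, hy]
          simp [this]
    · right
      rcases eq_symm_none_or e u with hz | ⟨y, hy⟩
      · exact absurd (hvB _ (hz ▸ hu)) (symm_some_ne e x)
      · exact ⟨y, (downB_some_iff e B).2 (by rw [← hy, hu])⟩
  · -- connectedness
    intro x y
    have hπx : ∀ z : Fin m,
        (fun u => (e u).elim wb id) (e.symm (some z)) = z := by intro z; simp
    have hπv : (fun u => (e u).elim wb id) (e.symm none) = wb := by simp
    set π : Fin (m+1) → Fin m := fun u => (e u).elim wb id with hπ
    have main : ∀ a b, Relation.EqvGen (fun x y => σ x = y ∨ B x = some y) a b →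
        Relation.EqvGen (fun x y => down e σ x = y ∨ downB e B x = some y) (π a) (π b) := by
      intro a b hab
      induction hab with
      | rel s t hst =>
        rcases hst with hst | hst
        · rcases eq_symm_none_or e s with hs | ⟨xs, hs⟩
          · have ht : t = e.symm (some wb) := by rw [← hst, hs, hwb]
            rw [hs, ht, hπv, hπx]
            exact Relation.EqvGen.refl _
          · rcases eq_symm_none_or e t with ht | ⟨xt, ht⟩
            · have hxw : xs = wb := by
                apply symm_some_inj e
                rw [← hs, ← hwb, ← hσ s, hst, ht]
              rw [hs, ht, hπv, hπx, hxw]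
              exact Relation.EqvGen.refl _
            · rw [hs, ht, hπx, hπx]
              exact Relation.EqvGen.rel _ _ (Or.inl (down_eq e σ (by rw [← hs, ← ht, hst])))
        · rcases eq_symm_none_or e s with hs | ⟨xs, hs⟩
          · have ht : t = e.symm none := hvB t (hs ▸ hst)
            rw [hs, ht]
            exact Relation.EqvGen.refl _
          · rcases eq_symm_none_or e t with ht | ⟨xt, ht⟩
            · exfalso
              exact symm_some_ne e xs (hs ▸ hBv s (ht ▸ hst))
            · rw [hs, ht, hπx, hπx]
              exact Relation.EqvGen.rel _ _
                (Or.inr ((downB_some_iff e B).2 (by rw [← hs, ← ht, hst])))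
      | refl a => exact Relation.EqvGen.refl _
      | symm a b _ ih => exact Relation.EqvGen.symm _ _ ih
      | trans a b c _ _ ih1 ih2 => exact Relation.EqvGen.trans _ _ _ ih1 ih2
    have h := main (e.symm (some x)) (e.symm (some y)) (hconn _ _)
    rwa [hπx, hπx] at h

end Del

section DelType

variable {m : ℕ} (e : Fin (m+1) ≃ Option (Fin m))
variable {σ : Equiv.Perm (Fin (m+1))} {B : Fin (m+1) → Option (Fin (m+1))}

lemma nat_card_fin (k : ℕ) : Nat.card (Fin k) = k := by
  simp [Nat.card_eq_fintype_card]

lemma del_type (hC : IsCycRed σ B) (hv : B (e.symm none) = some (e.symm none))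
    {wb : Fin m} (hwb : σ (e.symm none) = e.symm (some wb))
    {k2 k3 l2 l3 : ℕ} (hT : HasCombType σ B k2 k3 l2 l3) :
    1 ≤ k2 ∧ 1 ≤ l3 ∧
      HasCombType (down e σ) (downB e B) (k2-1) k3 (l2+1) (l3-1) := by
  obtain ⟨hσ, hinj, htri, hadj, hconn⟩ := hC
  obtain ⟨hmov, hedge, hfix, hloop⟩ := hT
  have hwv : σ (e.symm (some wb)) = e.symm none := by rw [← hwb, hσ]
  have hBv : ∀ u, B u = some (e.symm none) → u = e.symm none :=
    fun u hu => hinj u _ _ hu hv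
  have hvB : ∀ u, B (e.symm none) = some u → u = e.symm none :=
    fun u hu => (Option.some_injective _ (hv.symm.trans hu)).symm
  have hsome : ∀ x : Fin m, x ≠ wb → ∃ y, σ (e.symm (some x)) = e.symm (some y) := by
    intro x hx
    rcases eq_symm_none_or e (σ (e.symm (some x))) with h | ⟨y, hy⟩
    · exact absurd (symm_some_inj e (show e.symm (some x) = e.symm (some wb) by
        rw [← hwb, ← h, hσ])) hx
    · exact ⟨y, hy⟩
  have dwb : down e σ wb = wb := down_wb e hσ hwb
  -- a-loops of the new structure
  have hfix' : Nat.card {x : Fin m // down e σ x = x} = l2 + 1 := by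
    have h1 := card_puncture (fun x : Fin m => down e σ x = x) wb dwb
    have h2 : Nat.card {u : Fin (m+1) // σ u = u}
        = Nat.card {x : Fin m // down e σ x = x ∧ x ≠ wb} := by
      apply card_transport e (fun u => σ u = u) (fun x => down e σ x = x ∧ x ≠ wb)
        (fun h => symm_some_ne e wb (hwb.symm.trans h))
      intro x
      constructor
      · rintro ⟨h1', h2'⟩
        obtain ⟨y, hy⟩ := hsome x h2'
        have hyx : y = x := (down_eq e σ hy).symm.trans h1'
        rw [hyx] at hy
        exact hy
      · intro h
        have h2' : x ≠ wb := by
          intro h'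
          rw [h'] at h
          exact symm_some_ne e wb ((hwv.symm.trans h).symm)
        exact ⟨down_eq e σ h, h2'⟩
    rw [h1, ← h2, hfix]
  -- moving vertices
  have hsum0 : Nat.card {u : Fin (m+1) // σ u = u}
      + Nat.card {u : Fin (m+1) // σ u ≠ u} = m + 1 := by
    have h := nat_card_subtype_add (fun u : Fin (m+1) => σ u = u)
    rwa [nat_card_fin] at h
  have hsum1 : Nat.card {x : Fin m // down e σ x = x}
      + Nat.card {x : Fin m // down e σ x ≠ x} = m := by
    have h := nat_card_subtype_add (fun x : Fin m => down e σ x = x)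
    rwa [nat_card_fin] at h
  have hk2 : 1 ≤ k2 := by
    have hne : Nat.card {u : Fin (m+1) // σ u ≠ u} ≠ 0 := by
      have : Nonempty {u : Fin (m+1) // σ u ≠ u} :=
        ⟨⟨e.symm none, fun h => symm_some_ne e wb (hwb.symm.trans h)⟩⟩
      exact Nat.card_ne_zero.mpr ⟨this, inferInstance⟩
    rw [hmov] at hne
    omega
  have hmov' : Nat.card {x : Fin m // down e σ x ≠ x} = 2 * (k2 - 1) := by
    rw [hfix, hmov] at hsum0
    rw [hfix'] at hsum1
    omega
  -- b-loops
  have hl3 : Nat.card {x : Fin m // downB e B x = some x} = l3 - 1 ∧ 1 ≤ l3 := by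
    have h1 := card_puncture (fun u : Fin (m+1) => B u = some u) (e.symm none) hv
    have h2 : Nat.card {u : Fin (m+1) // B u = some u ∧ u ≠ e.symm none}
        = Nat.card {x : Fin m // downB e B x = some x} := by
      apply card_transport e _ _ (fun h => h.2 rfl)
      intro x
      constructor
      · intro h
        exact ⟨(downB_some_iff e B).1 h, symm_some_ne e x⟩
      · rintro ⟨h1', _⟩
        exact (downB_some_iff e B).2 h1'
    rw [h1, h2] at hloop
    omega
  -- isolated b-edges
  have hedge' : Nat.card {x : Fin m //
      ∃ y, x ≠ y ∧ downB e B x = some y ∧ downB e B y = none} = k3 := by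
    rw [← hedge]
    symm
    apply card_transport e _ _
    · rintro ⟨z, hz1, hz2, hz3⟩
      exact hz1 (hvB z hz2).symm
    · intro x
      constructor
      · rintro ⟨y, h1, h2, h3⟩
        refine ⟨e.symm (some y), fun h => h1 (symm_some_inj e h),
          (downB_some_iff e B).1 h2, ?_⟩
        rcases downB_none_cases e B h3 with h | h
        · exact h
        · exact absurd (hBv _ h) (symm_some_ne e y)
      · rintro ⟨z, h1, h2, h3⟩
        have hz : z ≠ e.symm none := by
          intro h'
          rw [h'] at h2
          exact symm_some_ne e x (hBv _ h2)
        rcases eq_symm_none_or e z with h' | ⟨y, hy⟩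
        · exact absurd h' hz
        · subst hy
          exact ⟨y, fun h => h1 (by rw [h]), (downB_some_iff e B).2 h2,
            downB_none e B h3⟩
  exact ⟨hk2, hl3.2, hmov', hedge', hfix', hl3.1⟩

end DelType

section Ins

variable {m : ℕ} (e : Fin (m+1) ≃ Option (Fin m))
variable {σ' : Equiv.Perm (Fin m)} {B' : Fin m → Option (Fin m)}

lemma upB_some_iff (B' : Fin m → Option (Fin m)) {x y : Fin m} :
    upB e B' (e.symm (some x)) = some (e.symm (some y)) ↔ B' x = some y := by
  rw [upB_some]
  cases hB : B' x with
  | none => simp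
  | some z =>
    simp only [Option.map_some]
    constructor
    · intro h
      exact congrArg some (symm_some_inj e (Option.some_injective _ h))
    · intro h
      rw [Option.some_injective _ h]

lemma upB_some_cases {x : Fin m} {z : Fin (m+1)}
    (h : upB e B' (e.symm (some x)) = some z) :
    ∃ y, z = e.symm (some y) ∧ B' x = some y := by
  rw [upB_some] at h
  cases hB : B' x with
  | none => rw [hB] at h; exact absurd h (by simp)
  | some y =>
    rw [hB] at h
    exact ⟨y, (Option.some_injective _ h).symm, rfl⟩

lemma ins_spec (hC : IsCycRed σ' B') {wb : Fin m} (hw : σ' wb = wb) :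
    IsCycRed (up e σ' wb) (upB e B') := by
  obtain ⟨hσ, hinj, htri, hadj, hconn⟩ := hC
  refine ⟨?_, ?_, ?_, ?_, ?_⟩
  · -- involution
    intro u
    rcases eq_symm_none_or e u with hu | ⟨x, hu⟩
    · rw [hu, up_none, up_w e σ' hw]
    · subst hu
      by_cases hx : x = wb
      · rw [hx, up_w e σ' hw, up_none]
      · rw [up_some e σ' hw hx, up_some e σ' hw (fun h => hx (σ'.injective (h.trans hw.symm))),
          hσ]
  · -- injectivity
    intro u u' z hu hu'
    rcases eq_symm_none_or e u with h1 | ⟨x, h1⟩ <;>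
      rcases eq_symm_none_or e u' with h2 | ⟨x', h2⟩ <;> subst h1 <;> subst h2
    · rfl
    · rw [upB_none] at hu
      obtain ⟨y, hy, _⟩ := upB_some_cases e hu'
      exact absurd (hy ▸ (Option.some_injective _ hu)).symm (symm_some_ne e y)
    · rw [upB_none] at hu'
      obtain ⟨y, hy, _⟩ := upB_some_cases e hu
      exact absurd (hy ▸ (Option.some_injective _ hu')).symm (symm_some_ne e y)
    · obtain ⟨y, hy, hBy⟩ := upB_some_cases e hu
      obtain ⟨y', hy', hBy'⟩ := upB_some_cases e hu'
      have : y = y' := symm_some_inj e (hy.symm.trans hy')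
      subst this
      rw [hinj x x' y hBy hBy']
  · -- triangle
    intro u u' u'' h1 h2
    rcases eq_symm_none_or e u with hu | ⟨x, hu⟩
    · subst hu
      rw [upB_none] at h1
      have hu' : u' = e.symm none := (Option.some_injective _ h1).symm
      subst hu'
      rw [upB_none] at h2
      have hu'' : u'' = e.symm none := (Option.some_injective _ h2).symm
      subst hu''
      exact upB_none e B'
    · subst hu
      obtain ⟨y, hy, hBy⟩ := upB_some_cases e h1
      subst hy
      obtain ⟨z, hz, hBz⟩ := upB_some_cases e h2
      subst hz
      exact (upB_some_iff e B').2 (htri x y z hBy hBz)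
  · -- adjacency
    intro u
    rcases eq_symm_none_or e u with hu | ⟨x, hu⟩
    · subst hu; left; rw [upB_none]; exact Option.some_ne_none _
    · subst hu
      rcases hadj x with h | ⟨y, hy⟩
      · left
        rw [upB_some]
        cases hB : B' x with
        | none => exact absurd hB h
        | some y => exact fun h' => by simp at h'
      · right
        exact ⟨e.symm (some y), (upB_some_iff e B').2 hy⟩
  · -- connectedness
    intro u u'
    have main : ∀ x y : Fin m,
        Relation.EqvGen (fun a b => σ' a = b ∨ B' a = some b) x y →
        Relation.EqvGen (fun a b => up e σ' wb a = b ∨ upB e B' a = some b)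
          (e.symm (some x)) (e.symm (some y)) := by
      intro x y hxy
      induction hxy with
      | rel s t hst =>
        rcases hst with hst | hst
        · by_cases hs : s = wb
          · have ht : t = wb := by rw [← hst, hs, hw]
            rw [hs, ht]
            exact Relation.EqvGen.refl _
          · exact Relation.EqvGen.rel _ _ (Or.inl (by rw [up_some e σ' hw hs, hst]))
        · exact Relation.EqvGen.rel _ _ (Or.inr ((upB_some_iff e B').2 hst))
      | refl a => exact Relation.EqvGen.refl _
      | symm a b _ ih => exact Relation.EqvGen.symm _ _ ih
      | trans a b c _ _ ih1 ih2 => exact Relation.EqvGen.trans _ _ _ ih1 ih2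
    have hvw : Relation.EqvGen (fun a b => up e σ' wb a = b ∨ upB e B' a = some b)
        (e.symm none) (e.symm (some wb)) :=
      Relation.EqvGen.rel _ _ (Or.inl (up_none e σ' wb))
    rcases eq_symm_none_or e u with h1 | ⟨x, h1⟩ <;>
      rcases eq_symm_none_or e u' with h2 | ⟨x', h2⟩ <;> subst h1 <;> subst h2
    · exact Relation.EqvGen.refl _
    · exact Relation.EqvGen.trans _ _ _ hvw (main wb x' (hconn wb x'))
    · exact Relation.EqvGen.symm _ _
        (Relation.EqvGen.trans _ _ _ hvw (main wb x (hconn wb x)))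
    · exact main x x' (hconn x x')

lemma ins_type (hC : IsCycRed σ' B') {wb : Fin m} (hw : σ' wb = wb)
    {a k3 c d : ℕ} (hT : HasCombType σ' B' a k3 c d) :
    1 ≤ c ∧ HasCombType (up e σ' wb) (upB e B') (a+1) k3 (c-1) (d+1) := by
  obtain ⟨hσ, hinj, htri, hadj, hconn⟩ := hC
  obtain ⟨hmov, hedge, hfix, hloop⟩ := hT
  -- fixed points of the new permutation
  have hfix' : Nat.card {u : Fin (m+1) // up e σ' wb u = u} = c - 1 ∧ 1 ≤ c := by
    have h2 : Nat.card {u : Fin (m+1) // up e σ' wb u = u}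
        = Nat.card {x : Fin m // σ' x = x ∧ x ≠ wb} := by
      apply card_transport e (fun u => up e σ' wb u = u) (fun x => σ' x = x ∧ x ≠ wb)
      · intro h
        rw [up_none] at h
        exact symm_some_ne e wb h
      · intro x
        constructor
        · rintro ⟨h1, h2⟩
          have h3 : up e σ' wb (e.symm (some x)) = e.symm (some x) := by
            rw [up_some e σ' hw h2, h1]
          exact h3
        · intro h
          have hx : x ≠ wb := by
            intro h'
            rw [h', up_w e σ' hw] at h
            exact symm_some_ne e wb h.symm
          rw [up_some e σ' hw hx] at h
          exact ⟨symm_some_inj e h, hx⟩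
    have h1 := card_puncture (fun x : Fin m => σ' x = x) wb hw
    rw [hfix] at h1
    have h1' : c = Nat.card {x : Fin m // σ' x = x ∧ x ≠ wb} + 1 := h1
    rw [h2]
    omega
  obtain ⟨hfixc, hc⟩ := hfix'
  -- moving points
  have hsum0 : Nat.card {x : Fin m // σ' x = x}
      + Nat.card {x : Fin m // σ' x ≠ x} = m := by
    have h := nat_card_subtype_add (fun x : Fin m => σ' x = x)
    rwa [nat_card_fin] at h
  have hsum1 : Nat.card {u : Fin (m+1) // up e σ' wb u = u}
      + Nat.card {u : Fin (m+1) // up e σ' wb u ≠ u} = m + 1 := by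
    have h := nat_card_subtype_add (fun u : Fin (m+1) => up e σ' wb u = u)
    rwa [nat_card_fin] at h
  have hmov' : Nat.card {u : Fin (m+1) // up e σ' wb u ≠ u} = 2 * (a+1) := by
    rw [hfix, hmov] at hsum0
    rw [hfixc] at hsum1
    omega
  -- b-loops
  have hloop' : Nat.card {u : Fin (m+1) // upB e B' u = some u} = d + 1 := by
    have h1 := card_puncture (fun u : Fin (m+1) => upB e B' u = some u)
      (e.symm none) (upB_none e B')
    have h2 : Nat.card {u : Fin (m+1) // upB e B' u = some u ∧ u ≠ e.symm none}
        = Nat.card {x : Fin m // B' x = some x} := by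
      apply card_transport e _ (fun x => B' x = some x) (fun h => h.2 rfl)
      intro x
      constructor
      · intro h
        exact ⟨(upB_some_iff e B').2 h, symm_some_ne e x⟩
      · rintro ⟨h1', _⟩
        exact (upB_some_iff e B').1 h1'
    rw [h1, h2, hloop]
  -- isolated b-edges
  have hedge' : Nat.card {u : Fin (m+1) //
      ∃ z, u ≠ z ∧ upB e B' u = some z ∧ upB e B' z = none} = k3 := by
    rw [← hedge]
    apply card_transport e _ _
    · rintro ⟨z, hz1, hz2, hz3⟩
      rw [upB_none] at hz2
      exact hz1 (Option.some_injective _ hz2)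
    · intro x
      constructor
      · rintro ⟨y, h1, h2, h3⟩
        refine ⟨e.symm (some y), fun h => h1 (symm_some_inj e h),
          (upB_some_iff e B').2 h2, ?_⟩
        rw [upB_some, h3]
        rfl
      · rintro ⟨z, h1, h2, h3⟩
        have hz : z ≠ e.symm none := by
          intro h'
          rw [h', upB_none] at h3
          exact Option.some_ne_none _ h3
        rcases eq_symm_none_or e z with h' | ⟨y, hy⟩
        · exact absurd h' hz
        · subst hy
          refine ⟨y, fun h => h1 (by rw [h]), (upB_some_iff e B').1 h2, ?_⟩
          rw [upB_some] at h3
          simpa using h3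
  exact ⟨hc, hmov', hedge', hfixc, hloop'⟩

end Ins

section RT

variable {m : ℕ} (e : Fin (m+1) ≃ Option (Fin m))

lemma rt1_perm {σ : Equiv.Perm (Fin (m+1))} (hσ : ∀ u, σ (σ u) = u) {wb : Fin m}
    (hwb : σ (e.symm none) = e.symm (some wb)) : up e (down e σ) wb = σ := by
  have hw : down e σ wb = wb := down_wb e hσ hwb
  have hsome : ∀ x : Fin m, x ≠ wb → ∃ y, σ (e.symm (some x)) = e.symm (some y) := by
    intro x hx
    rcases eq_symm_none_or e (σ (e.symm (some x))) with h | ⟨y, hy⟩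
    · exact absurd (symm_some_inj e (show e.symm (some x) = e.symm (some wb) by
        rw [← hwb, ← h, hσ])) hx
    · exact ⟨y, hy⟩
  apply Equiv.ext
  intro u
  rcases eq_symm_none_or e u with hu | ⟨x, hu⟩ <;> subst hu
  · rw [up_none, hwb]
  · by_cases hx : x = wb
    · subst hx
      rw [up_w e _ hw, ← hσ (e.symm none), hwb]
    · obtain ⟨y, hy⟩ := hsome x hx
      rw [up_some e _ hw hx, down_eq e σ hy, hy]

lemma rt1_B {B : Fin (m+1) → Option (Fin (m+1))}
    (hinj : ∀ v w u, B v = some u → B w = some u → v = w)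
    (hv : B (e.symm none) = some (e.symm none)) : upB e (downB e B) = B := by
  funext u
  rcases eq_symm_none_or e u with hu | ⟨x, hu⟩ <;> subst hu
  · rw [upB_none, hv]
  · rw [upB_some]
    cases hB : B (e.symm (some x)) with
    | none => rw [downB_none e B hB]; rfl
    | some z =>
      have hz : z ≠ e.symm none := by
        intro h
        rw [h] at hB
        exact symm_some_ne e x (hinj _ _ _ hB hv)
      rcases eq_symm_none_or e z with h' | ⟨y, hy⟩
      · exact absurd h' hz
      · subst hy
        rw [(downB_some_iff e B).2 hB]
        rfl

lemma rt2_perm {σ' : Equiv.Perm (Fin m)} {wb : Fin m} (hw : σ' wb = wb) :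
    down e (up e σ' wb) = σ' := by
  apply Equiv.ext
  intro x
  by_cases hx : x = wb
  · subst hx
    rw [hw]
    exact down_eq_none e _ (up_w e σ' hw) (up_none e σ' x)
  · exact down_eq e _ (up_some e σ' hw hx)

lemma rt2_B (B' : Fin m → Option (Fin m)) : downB e (upB e B') = B' := by
  funext x
  cases hB : B' x with
  | none =>
    unfold downB
    rw [upB_some, hB]
    rfl
  | some y => exact (downB_some_iff e _).2 ((upB_some_iff e B').2 hB)

end RT

section Key

/-- The set of cyclically reduced structures of a given type. -/
def SA (n k2 k3 l2 l3 : ℕ) :=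
  {p : Equiv.Perm (Fin n) × (Fin n → Option (Fin n)) //
    IsCycRed p.1 p.2 ∧ HasCombType p.1 p.2 k2 k3 l2 l3}

instance SA_finite (n k2 k3 l2 l3 : ℕ) : Finite (SA n k2 k3 l2 l3) := by
  unfold SA; infer_instance

/-- Nat-level count. -/
noncomputable def N (n k2 k3 l2 l3 : ℕ) : ℕ := Nat.card (SA n k2 k3 l2 l3)

def Lt (m a k3 c d : ℕ) :=
  Σ p : SA (m+1) (a+1) k3 c (d+1), {v : Fin (m+1) // p.1.2 v = some v}

def Rt (m a k3 c d : ℕ) :=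
  Σ q : SA m a k3 (c+1) d, Fin (m+1) × {w : Fin m // q.1.1 w = w}

lemma Lt_ext {m a k3 c d : ℕ} {z z' : Lt m a k3 c d}
    (h1 : z.1.1 = z'.1.1) (h2 : z.2.1 = z'.2.1) : z = z' := by
  obtain ⟨⟨p, hp⟩, ⟨v, hv⟩⟩ := z
  obtain ⟨⟨p', hp'⟩, ⟨v', hv'⟩⟩ := z'
  dsimp at h1 h2
  subst h1
  subst h2
  rfl

lemma Rt_ext {m a k3 c d : ℕ} {z z' : Rt m a k3 c d}
    (h1 : z.1.1 = z'.1.1) (h2 : z.2.1 = z'.2.1) (h3 : z.2.2.1 = z'.2.2.1) : z = z' := by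
  obtain ⟨⟨p, hp⟩, i, ⟨w, hw⟩⟩ := z
  obtain ⟨⟨p', hp'⟩, i', ⟨w', hw'⟩⟩ := z'
  dsimp at h1 h2 h3
  subst h1
  subst h2
  subst h3
  rfl

def wbOf {m : ℕ} (σ : Equiv.Perm (Fin (m+1))) (v : Fin (m+1)) (h : σ v ≠ v) : Fin m :=
  ((finSuccEquiv' v) (σ v)).get (by
    rw [Option.isSome_iff_ne_none]
    intro h'
    exact h (by rw [← (finSuccEquiv' v).symm_apply_apply (σ v), h', finSuccEquiv'_symm_none]))

lemma wbOf_spec {m : ℕ} (σ : Equiv.Perm (Fin (m+1))) (v : Fin (m+1)) (h : σ v ≠ v) :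
    σ ((finSuccEquiv' v).symm none) = (finSuccEquiv' v).symm (some (wbOf σ v h)) := by
  rw [finSuccEquiv'_symm_none]
  unfold wbOf
  rw [Option.some_get, Equiv.symm_apply_apply]

lemma wbOf_eq {m : ℕ} {σ : Equiv.Perm (Fin (m+1))} {v : Fin (m+1)} {h : σ v ≠ v} {wb : Fin m}
    (hwb : σ ((finSuccEquiv' v).symm none) = (finSuccEquiv' v).symm (some wb)) :
    wbOf σ v h = wb :=
  symm_some_inj (finSuccEquiv' v) ((wbOf_spec σ v h).symm.trans hwb)

def Fmap {m a k3 c d : ℕ} (hm : 2 ≤ m) (z : Lt m a k3 c d) : Rt m a k3 c d :=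
  let σ := z.1.1.1
  let B := z.1.1.2
  let v := z.2.1
  let e := finSuccEquiv' v
  have hC : IsCycRed σ B := z.1.2.1
  have hT : HasCombType σ B (a+1) k3 c (d+1) := z.1.2.2
  have hv : B (e.symm none) = some (e.symm none) := by
    rw [finSuccEquiv'_symm_none]; exact z.2.2
  have hmv : σ v ≠ v := bloop_moves (by omega) hC z.2.2
  have hwb : σ (e.symm none) = e.symm (some (wbOf σ v hmv)) := wbOf_spec σ v hmv
  ⟨⟨(down e σ, downB e B), del_spec e hC hv hwb, (del_type e hC hv hwb hT).2.2⟩,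
    v, wbOf σ v hmv, down_wb e hC.1 hwb⟩

def Gmap {m a k3 c d : ℕ} (z : Rt m a k3 c d) : Lt m a k3 c d :=
  let σ' := z.1.1.1
  let B' := z.1.1.2
  let i := z.2.1
  let wb := z.2.2.1
  let e := finSuccEquiv' i
  have hC : IsCycRed σ' B' := z.1.2.1
  have hT : HasCombType σ' B' a k3 (c+1) d := z.1.2.2
  have hw : σ' wb = wb := z.2.2.2
  ⟨⟨(up e σ' wb, upB e B'), ins_spec e hC hw, (ins_type e hC hw hT).2⟩,
    i, by
      show upB e B' i = some i
      rw [show i = e.symm none from (finSuccEquiv'_symm_none i).symm]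
      exact upB_none e B'⟩

lemma GF {m a k3 c d : ℕ} (hm : 2 ≤ m) (z : Lt m a k3 c d) : Gmap (Fmap hm z) = z := by
  obtain ⟨⟨⟨σ, B⟩, hC, hT⟩, v, hv⟩ := z
  have hv' : B ((finSuccEquiv' v).symm none) = some ((finSuccEquiv' v).symm none) := by
    rw [finSuccEquiv'_symm_none]; exact hv
  have hmv : σ v ≠ v := bloop_moves (by omega) hC hv
  apply Lt_ext
  · refine Prod.ext ?_ ?_
    · exact rt1_perm (finSuccEquiv' v) hC.1 (wbOf_spec σ v hmv)
    · exact rt1_B (finSuccEquiv' v) hC.2.1 hv'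
  · rfl

lemma FG {m a k3 c d : ℕ} (hm : 2 ≤ m) (z : Rt m a k3 c d) : Fmap hm (Gmap z) = z := by
  obtain ⟨⟨⟨σ', B'⟩, hC, hT⟩, i, wb, hw⟩ := z
  apply Rt_ext
  · refine Prod.ext ?_ ?_
    · exact rt2_perm (finSuccEquiv' i) hw
    · exact rt2_B (finSuccEquiv' i) B'
  · rfl
  · have h0 := up_none (finSuccEquiv' i) σ' wb
    rw [finSuccEquiv'_symm_none] at h0
    have hne : (up (finSuccEquiv' i) σ' wb) i ≠ i := by
      rw [h0]
      exact fun h => symm_some_ne _ wb (h.trans (finSuccEquiv'_symm_none i).symm)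
    show wbOf (up (finSuccEquiv' i) σ' wb) i hne = wb
    exact wbOf_eq (up_none (finSuccEquiv' i) σ' wb)

lemma key_count (m a k3 c d : ℕ) (hm : 2 ≤ m) :
    (d+1) * N (m+1) (a+1) k3 c (d+1) = ((m+1) * (c+1)) * N m a k3 (c+1) d := by
  have hL : Nat.card (Lt m a k3 c d) = (d+1) * N (m+1) (a+1) k3 c (d+1) :=
    nat_card_sigma_const _ (d+1) (fun p => p.2.2.2.2.2)
  have hR : Nat.card (Rt m a k3 c d) = ((m+1) * (c+1)) * N m a k3 (c+1) d := by
    apply nat_card_sigma_const _ ((m+1) * (c+1))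
    intro q
    rw [Nat.card_prod, nat_card_fin, q.2.2.2.2.1]
  have hLR : Nat.card (Lt m a k3 c d) = Nat.card (Rt m a k3 c d) :=
    Nat.card_congr ⟨Fmap hm, Gmap, GF hm, FG hm⟩
  rw [← hL, hLR, hR]

lemma empty_case (n k3 l2 l3 : ℕ) (hn : 2 ≤ n) (hl3 : 1 ≤ l3) : N n 0 k3 l2 l3 = 0 := by
  unfold N
  rw [Nat.card_eq_zero]
  left
  constructor
  rintro ⟨⟨σ, B⟩, hC, hmov, hedge, hfix, hloop⟩
  have h0 : Nat.card {v : Fin n // B v = some v} ≠ 0 := by rw [hloop]; omega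
  obtain ⟨⟨v, hv⟩⟩ := (Nat.card_ne_zero.mp h0).1
  have hmv := bloop_moves hn hC hv
  have h1 : Nat.card {v : Fin n // σ v ≠ v} ≠ 0 :=
    Nat.card_ne_zero.mpr ⟨⟨⟨v, hmv⟩⟩, inferInstance⟩
  rw [hmov] at h1
  omega

end Key

end CRAux

theorem stmt0 (n k2 k3 l2 l3 : ℤ) (hn : 3 ≤ n) (hk2 : 0 ≤ k2) (hk3 : 0 ≤ k3)
    (hl2 : 0 ≤ l2) (hl3 : 1 ≤ l3) :
    l3 * (s n k2 k3 l2 l3 : ℤ) =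
      n * (l2 + 1) * (s (n - 1) (k2 - 1) k3 (l2 + 1) (l3 - 1) : ℤ) := by
  rcases eq_or_lt_of_le hk2 with hk20 | hk21
  · -- k2 = 0 : both sides vanish
    have hrhs : s (n-1) (k2-1) k3 (l2+1) (l3-1) = 0 := by
      unfold s
      rw [if_neg]
      rintro ⟨-, h, -⟩
      omega
    have hlhs : s n k2 k3 l2 l3 = 0 := by
      unfold s
      rw [if_pos ⟨by omega, hk2, hk3, hl2, by omega⟩]
      rw [show k2.toNat = 0 from by omega]
      exact CRAux.empty_case n.toNat k3.toNat l2.toNat l3.toNat (by omega) (by omega)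
    rw [hlhs, hrhs]
    simp
  · obtain ⟨m, a, d, hm1, ha1, hd1, hm2⟩ :
        ∃ m a d, n.toNat = m + 1 ∧ k2.toNat = a + 1 ∧ l3.toNat = d + 1 ∧ 2 ≤ m :=
      ⟨n.toNat - 1, k2.toNat - 1, l3.toNat - 1, by omega, by omega, by omega, by omega⟩
    have h1 : s n k2 k3 l2 l3 = CRAux.N (m+1) (a+1) k3.toNat l2.toNat (d+1) := by
      unfold s CRAux.N CRAux.SA
      rw [if_pos ⟨by omega, hk2, hk3, hl2, by omega⟩, hm1, ha1, hd1]
    have h2 : s (n-1) (k2-1) k3 (l2+1) (l3-1) = CRAux.N m a k3.toNat (l2.toNat+1) d := by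
      unfold s CRAux.N CRAux.SA
      rw [if_pos ⟨by omega, by omega, hk3, by omega, by omega⟩]
      rw [show (n-1).toNat = m from by omega, show (k2-1).toNat = a from by omega,
        show (l2+1).toNat = l2.toNat + 1 from by omega, show (l3-1).toNat = d from by omega]
    rw [h1, h2]
    have hk := CRAux.key_count m a k3.toNat l2.toNat d hm2
    have hkz : ((d:ℤ)+1) * (CRAux.N (m+1) (a+1) k3.toNat l2.toNat (d+1) : ℤ)
        = (((m:ℤ)+1) * ((l2.toNat:ℤ)+1)) * (CRAux.N m a k3.toNat (l2.toNat+1) d : ℤ) := by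
      exact_mod_cast hk
    rw [show l3 = (d:ℤ)+1 from by omega, show n = (m:ℤ)+1 from by omega]
    have hl2c : (l2 : ℤ) = ((l2.toNat : ℕ) : ℤ) := by omega
    linear_combination hkz
      - ((m:ℤ)+1) * (CRAux.N m a k3.toNat (l2.toNat+1) d : ℤ) * hl2c
end

section
/- Let n ≥ 3 and k₂, ℓ₂, ℓ₃ ≥ 0, k₃ ≥ 1 be integers. Then k₃ · s(n,k₂,k₃,ℓ₂,ℓ₃) = 2n(n−1)·(k₂−1+ℓ₂) · s(n−2, k₂−1, k₃−1, ℓ₂, ℓ₃). -/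
section Gen
variable {V W : Type*}

def Rel' (σ : Equiv.Perm V) (B : V → Option V) : V → V → Prop :=
  fun x y => σ x = y ∨ B x = some y

def CR (σ : Equiv.Perm V) (B : V → Option V) : Prop :=
  (∀ v, σ (σ v) = v) ∧
  (∀ v w u, B v = some u → B w = some u → v = w) ∧
  (∀ v w u, B v = some w → B w = some u → B u = some v) ∧
  (∀ v, B v ≠ none ∨ ∃ u, B u = some v) ∧
  (∀ v w : V, Relation.EqvGen (Rel' σ B) v w)

def CT (σ : Equiv.Perm V) (B : V → Option V) (k2 k3 l2 l3 : ℕ) : Prop :=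
  Nat.card {v : V // σ v ≠ v} = 2 * k2 ∧
  Nat.card {v : V // ∃ w, v ≠ w ∧ B v = some w ∧ B w = none} = k3 ∧
  Nat.card {v : V // σ v = v} = l2 ∧
  Nat.card {v : V // B v = some v} = l3

theorem isCycRed_iff_CR {n : ℕ} (σ : Equiv.Perm (Fin n)) (B : Fin n → Option (Fin n)) :
    IsCycRed σ B ↔ CR σ B := Iff.rfl

theorem hasCombType_iff_CT {n : ℕ} (σ : Equiv.Perm (Fin n)) (B : Fin n → Option (Fin n))
    (k2 k3 l2 l3 : ℕ) : HasCombType σ B k2 k3 l2 l3 ↔ CT σ B k2 k3 l2 l3 := Iff.rfl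

def mapB (e : V ≃ W) (B : V → Option V) : W → Option W := fun w => (B (e.symm w)).map e

theorem eqvGen_map {r : V → V → Prop} {r' : W → W → Prop} (f : V → W)
    (h : ∀ x y, r x y → r' (f x) (f y)) {a b : V} (hab : Relation.EqvGen r a b) :
    Relation.EqvGen r' (f a) (f b) := by
  induction hab with
  | rel x y hxy => exact Relation.EqvGen.rel _ _ (h _ _ hxy)
  | refl x => exact Relation.EqvGen.refl _
  | symm x y _ ih => exact ih.symm _ _
  | trans x y z _ _ ih1 ih2 => exact ih1.trans _ _ _ ih2

theorem mapB_eq_some (e : V ≃ W) (B : V → Option V) (w u : W) :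
    mapB e B w = some u ↔ B (e.symm w) = some (e.symm u) := by
  simp only [mapB, Option.map_eq_some_iff]
  constructor
  · rintro ⟨a, ha, rfl⟩; simpa using ha
  · intro h; exact ⟨e.symm u, h, by simp⟩

theorem mapB_eq_none (e : V ≃ W) (B : V → Option V) (w : W) :
    mapB e B w = none ↔ B (e.symm w) = none := by
  simp [mapB]

theorem CR_map (e : V ≃ W) {σ : Equiv.Perm V} {B : V → Option V} (h : CR σ B) :
    CR (e.permCongr σ) (mapB e B) := by
  obtain ⟨h1, h2, h3, h4, h5⟩ := h
  refine ⟨?_, ?_, ?_, ?_, ?_⟩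
  · intro v; simp [Equiv.permCongr_apply, h1]
  · intro v w u hv hw
    rw [mapB_eq_some] at hv hw
    have := h2 _ _ _ hv hw
    exact e.symm.injective this
  · intro v w u hv hw
    rw [mapB_eq_some] at hv hw ⊢
    exact h3 _ _ _ hv hw
  · intro v
    rcases h4 (e.symm v) with hh | ⟨u, hu⟩
    · left; rw [Ne, mapB_eq_none]; exact hh
    · right; exact ⟨e u, by rw [mapB_eq_some]; simpa using hu⟩
  · intro v w
    have := h5 (e.symm v) (e.symm w)
    have key := eqvGen_map (r' := Rel' (e.permCongr σ) (mapB e B)) e ?_ this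
    · simpa using key
    · intro x y hxy
      rcases hxy with hxy | hxy
      · left; simp [Equiv.permCongr_apply, hxy]
      · right; rw [mapB_eq_some]; simpa using hxy

theorem CT_map (e : V ≃ W) {σ : Equiv.Perm V} {B : V → Option V} {k2 k3 l2 l3 : ℕ}
    (h : CT σ B k2 k3 l2 l3) : CT (e.permCongr σ) (mapB e B) k2 k3 l2 l3 := by
  obtain ⟨h1, h2, h3, h4⟩ := h
  refine ⟨?_, ?_, ?_, ?_⟩
  · rw [← h1]
    refine Nat.card_congr (Equiv.subtypeEquiv e.symm fun v => ?_)
    simp only [Equiv.permCongr_apply, ne_eq]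
    constructor
    · intro hv hc; apply hv; rw [hc]; simp
    · intro hv hc; apply hv; apply e.injective; simpa using hc
  · rw [← h2]
    refine Nat.card_congr (Equiv.subtypeEquiv e.symm fun v => ?_)
    constructor
    · rintro ⟨w, hne, hs, hn⟩
      refine ⟨e.symm w, fun hc => hne (e.symm.injective hc), ?_, ?_⟩
      · rw [mapB_eq_some] at hs; exact hs
      · rw [mapB_eq_none] at hn; exact hn
    · rintro ⟨w, hne, hs, hn⟩
      refine ⟨e w, fun hc => hne (by rw [hc]; simp), ?_, ?_⟩
      · rw [mapB_eq_some]; simpa using hs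
      · rw [mapB_eq_none]; simpa using hn
  · rw [← h3]
    refine Nat.card_congr (Equiv.subtypeEquiv e.symm fun v => ?_)
    simp only [Equiv.permCongr_apply]
    constructor
    · intro hv; apply e.injective; simpa using hv
    · intro hv; rw [hv]; simp
  · rw [← h4]
    refine Nat.card_congr (Equiv.subtypeEquiv e.symm fun v => ?_)
    rw [mapB_eq_some]

end Gen
section CardHelpers
variable {α β : Type*}

theorem card_subtype_sum (P : α ⊕ β → Prop) [Finite α] [Finite β] :
    Nat.card {u : α ⊕ β // P u} =
      Nat.card {a : α // P (Sum.inl a)} + Nat.card {b : β // P (Sum.inr b)} := by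
  rw [Nat.card_congr (Equiv.subtypeSum), Nat.card_sum]

theorem card_subtype_iff {P Q : α → Prop} (h : ∀ a, P a ↔ Q a) :
    Nat.card {a // P a} = Nat.card {a // Q a} :=
  Nat.card_congr (Equiv.subtypeEquivRight h)

theorem card_subtype_or_eq [Finite α] {p : α → Prop} {a : α} (ha : ¬ p a) :
    Nat.card {x // p x ∨ x = a} = Nat.card {x // p x} + 1 := by
  classical
  have e : {x // p x ∨ x = a} ≃ {x // p x} ⊕ Unit :=
    { toFun := fun x => if hx : p x.1 then Sum.inl ⟨x.1, hx⟩ else Sum.inr ()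
      invFun := Sum.elim (fun x => ⟨x.1, Or.inl x.2⟩) (fun (_ : Unit) => ⟨a, Or.inr rfl⟩)
      left_inv := by
        rintro ⟨x, hx | rfl⟩
        · simp [hx]
        · simp [ha]
      right_inv := by
        rintro (⟨y, hy⟩ | ⟨⟩)
        · simp [hy]
        · simp [ha] }
  rw [Nat.card_congr e, Nat.card_sum]
  simp

theorem card_subtype_true [Finite α] : Nat.card {x : α // True} = Nat.card α := by
  exact Nat.card_congr (Equiv.subtypeUnivEquiv fun _ => trivial)

theorem card_subtype_false : Nat.card {x : α // False} = 0 := by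
  exact Nat.card_of_isEmpty

end CardHelpers

section SumConstr

variable {α : Type*} [DecidableEq α]

/-- the b-map on `α ⊕ Bool`: new isolated b-edge from `inr true` to `inr false`. -/
def Bs (D : α → Option α) : α ⊕ Bool → Option (α ⊕ Bool)
  | .inl z => (D z).map .inl
  | .inr true => some (.inr false)
  | .inr false => none

/-- marks: an endpoint of an isolated a-edge, or an a-loop with a boolean. -/
abbrev Mk (τ : Equiv.Perm α) := {x // τ x ≠ x} ⊕ ({x // τ x = x} × Bool)

/-- the spliced involution. -/
def sFun (τ : Equiv.Perm α) (m : Mk τ) : α ⊕ Bool → α ⊕ Bool :=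
  match m with
  | .inl x => fun u =>
      match u with
      | .inl z => if z = x.1 then .inr true else if z = τ x.1 then .inr false else .inl (τ z)
      | .inr true => .inl x.1
      | .inr false => .inl (τ x.1)
  | .inr (x, ε) => fun u =>
      match u with
      | .inl z => if z = x.1 then .inr ε else .inl (τ z)
      | .inr b => if b = ε then .inl x.1 else .inr b

theorem sFun_invol (τ : Equiv.Perm α) (hτ : ∀ z, τ (τ z) = z) (m : Mk τ) :
    Function.Involutive (sFun τ m) := by
  rcases m with ⟨x, hx⟩ | ⟨⟨x, hx⟩, ε⟩
  · rintro (z | b)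
    · simp only [sFun]
      by_cases h1 : z = x
      · simp [h1]
      · by_cases h2 : z = τ x
        · simp [h1, h2, hx]
        · have hτx : τ z ≠ x := fun hc => h2 (by rw [← hc, hτ])
          have hττ : τ z ≠ τ x := fun hc => h1 (τ.injective hc)
          simp [h1, h2, hτx, hττ, hτ]
    · cases b <;> simp [sFun, hτ, hx, Ne.symm hx]
  · rintro (z | b)
    · simp only [sFun]
      by_cases h1 : z = x
      · simp [h1, hx]
      · have : τ z ≠ x := fun hc => h1 (by rw [← hx] at hc; exact τ.injective hc)
        simp [h1, this, hτ]
    · by_cases h1 : b = ε <;> simp [sFun, h1, hx]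

/-- the spliced permutation. -/
def sPerm (τ : Equiv.Perm α) (hτ : ∀ z, τ (τ z) = z) (m : Mk τ) : Equiv.Perm (α ⊕ Bool) :=
  (sFun_invol τ hτ m).toPerm

@[simp] theorem sPerm_apply (τ : Equiv.Perm α) (hτ : ∀ z, τ (τ z) = z) (m : Mk τ) (u) :
    sPerm τ hτ m u = sFun τ m u := rfl

end SumConstr
section Bool
theorem card_bool_eq (c : Bool) : Nat.card {b : Bool // b = c} = 1 := by
  cases c <;> · rw [Nat.card_eq_fintype_card]; decide

theorem card_bool_all : Nat.card {b : Bool // True} = 2 := by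
  rw [Nat.card_eq_fintype_card]; decide
end Bool

theorem eqvGen_map' {V W : Type*} {r : V → V → Prop} {r' : W → W → Prop} (f : V → W)
    (h : ∀ x y, r x y → Relation.EqvGen r' (f x) (f y)) {a b : V}
    (hab : Relation.EqvGen r a b) : Relation.EqvGen r' (f a) (f b) := by
  induction hab with
  | rel x y hxy => exact h _ _ hxy
  | refl x => exact Relation.EqvGen.refl _
  | symm x y _ ih => exact ih.symm _ _
  | trans x y z _ _ ih1 ih2 => exact ih1.trans _ _ _ ih2

section Up
variable {α : Type*} [DecidableEq α] [Finite α] (τ : Equiv.Perm α) (hτ : ∀ z, τ (τ z) = z)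
  (D : α → Option α) (m : Mk τ)

theorem CR_up (h : CR τ D) : CR (sPerm τ hτ m) (Bs D) := by
  obtain ⟨h1, h2, h3, h4, h5⟩ := h
  have bs_cases : ∀ a u, Bs D a = some u →
      (∃ z z', a = Sum.inl z ∧ u = Sum.inl z' ∧ D z = some z') ∨
        (a = Sum.inr true ∧ u = Sum.inr false) := by
    rintro (z | b) u ha
    · left
      simp only [Bs, Option.map_eq_some_iff] at ha
      obtain ⟨a', ha', rfl⟩ := ha
      exact ⟨z, a', rfl, rfl, ha'⟩
    · cases b
      · cases ha
      · refine Or.inr ⟨rfl, ?_⟩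
        have : some (Sum.inr false : α ⊕ Bool) = some u := ha
        exact (Option.some_injective _ this).symm
  refine ⟨fun u => sFun_invol τ hτ m u, ?_, ?_, ?_, ?_⟩
  · -- injectivity
    intro a b u ha hb
    rcases bs_cases _ _ ha with ⟨z, z', rfl, rfl, hz⟩ | ⟨rfl, rfl⟩ <;>
      rcases bs_cases _ _ hb with ⟨y, y', rfl, hy', hyz⟩ | ⟨rfl, hy'⟩
    · obtain rfl : z' = y' := Sum.inl_injective hy'
      rw [h2 _ _ _ hz hyz]
    · cases hy'
    · cases hy'
    · rfl
  · -- triangle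
    intro a b u ha hb
    rcases bs_cases _ _ ha with ⟨z, z', rfl, rfl, hz⟩ | ⟨rfl, rfl⟩
    · rcases bs_cases _ _ hb with ⟨y, y', hy, rfl, hyz⟩ | ⟨hy, rfl⟩
      · obtain rfl : z' = y := Sum.inl_injective hy
        have := h3 _ _ _ hz hyz
        simp [Bs, this]
      · cases hy
    · cases hb
  · -- b-adjacency
    rintro (v | b)
    · rcases h4 v with hv | ⟨u, hu⟩
      · left; simp only [Bs, Ne, Option.map_eq_none_iff]; exact hv
      · right; exact ⟨.inl u, by simp [Bs, hu]⟩
    · cases b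
      · right; exact ⟨.inr true, rfl⟩
      · left; simp [Bs]
  · -- connectivity
    have key : ∀ z z' : α, Relation.EqvGen (Rel' τ D) z z' →
        Relation.EqvGen (Rel' (sPerm τ hτ m) (Bs D)) (.inl z) (.inl z') := by
      intro z z' hzz
      refine eqvGen_map' Sum.inl ?_ hzz
      intro a b hab
      rcases m with ⟨x, hx⟩ | ⟨⟨x, hx⟩, ε⟩
      · rcases hab with hab | hab
        · -- τ a = b
          have chain : Relation.EqvGen (Rel' (sPerm τ hτ (.inl ⟨x, hx⟩)) (Bs D))
              (.inl x) (.inl (τ x)) := by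
            refine Relation.EqvGen.trans _ (.inr true) _ ?_ ?_
            · exact Relation.EqvGen.rel _ _ (Or.inl (by simp [sFun, sPerm]))
            · refine Relation.EqvGen.trans _ (.inr false) _ ?_ ?_
              · exact Relation.EqvGen.rel _ _ (Or.inr rfl)
              · exact Relation.EqvGen.rel _ _ (Or.inl (by simp [sFun, sPerm]))
          by_cases ha : a = x
          · subst ha; rw [← hab]; exact chain
          · by_cases ha2 : a = τ x
            · subst ha2
              have hb : b = x := by rw [← hab, hτ]
              subst hb
              exact chain.symm _ _
            · refine Relation.EqvGen.rel _ _ (Or.inl ?_)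
              simp [sPerm, sFun, ha, ha2, hab]
        · exact Relation.EqvGen.rel _ _ (Or.inr (by simp [Bs, hab]))
      · rcases hab with hab | hab
        · by_cases ha : a = x
          · subst ha; rw [← hab, hx]; exact Relation.EqvGen.refl _
          · exact Relation.EqvGen.rel _ _ (Or.inl (by simp [sPerm, sFun, ha, hab]))
        · exact Relation.EqvGen.rel _ _ (Or.inr (by simp [Bs, hab]))
    have tofix : ∀ u : α ⊕ Bool, Relation.EqvGen (Rel' (sPerm τ hτ m) (Bs D)) u (.inr true) := by
      rintro (z | b)
      · rcases m with ⟨x, hx⟩ | ⟨⟨x, hx⟩, ε⟩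
        · refine Relation.EqvGen.trans _ (.inl x) _ (key _ _ (h5 z x)) ?_
          exact Relation.EqvGen.rel _ _ (Or.inl (by simp [sPerm, sFun]))
        · refine Relation.EqvGen.trans _ (.inl x) _ (key _ _ (h5 z x)) ?_
          refine Relation.EqvGen.trans _ (.inr ε) _ ?_ ?_
          · exact Relation.EqvGen.rel _ _ (Or.inl (by simp [sPerm, sFun]))
          · cases ε
            · have hstep : Rel' (sPerm τ hτ (Sum.inr (⟨x, hx⟩, false))) (Bs D)
                  (Sum.inr true) (Sum.inr false) := Or.inr rfl
              exact (Relation.EqvGen.rel _ _ hstep).symm _ _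
            · exact Relation.EqvGen.refl _
      · cases b
        · have hstep : Rel' (sPerm τ hτ m) (Bs D) (Sum.inr true) (Sum.inr false) := Or.inr rfl
          exact (Relation.EqvGen.rel _ _ hstep).symm _ _
        · exact Relation.EqvGen.refl _
    intro u u'
    exact Relation.EqvGen.trans _ _ _ (tofix u) ((tofix u').symm _ _)

end Up
section UpCount
variable {α : Type*} [DecidableEq α] [Finite α] (τ : Equiv.Perm α) (hτ : ∀ z, τ (τ z) = z)
  (D : α → Option α) (m : Mk τ)

theorem card_moved_up :
    Nat.card {u : α ⊕ Bool // sPerm τ hτ m u ≠ u} = Nat.card {z : α // τ z ≠ z} + 2 := by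
  rw [card_subtype_sum]
  rcases m with ⟨x, hx⟩ | ⟨⟨x, hx⟩, ε⟩
  · have e1 : Nat.card {z : α // sPerm τ hτ (.inl ⟨x, hx⟩) (Sum.inl z) ≠ Sum.inl z}
        = Nat.card {z : α // τ z ≠ z} := by
      apply card_subtype_iff; intro z
      by_cases h1 : z = x
      · subst h1; simp [sPerm, sFun, hx]
      · by_cases h2 : z = τ x
        · subst h2
          have : τ (τ x) ≠ τ x := by rw [hτ]; exact Ne.symm hx
          simp [sPerm, sFun, h1, this]
        · simp [sPerm, sFun, h1, h2]
    have e2 : Nat.card {b : Bool // sPerm τ hτ (.inl ⟨x, hx⟩) (Sum.inr b) ≠ Sum.inr b} = 2 := by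
      rw [card_subtype_iff (Q := fun _ => True) (fun b => by cases b <;> simp [sPerm, sFun]),
        card_bool_all]
    rw [e1, e2]; all_goals omega
  · have e1 : Nat.card {z : α // sPerm τ hτ (.inr (⟨x, hx⟩, ε)) (Sum.inl z) ≠ Sum.inl z}
        = Nat.card {z : α // τ z ≠ z} + 1 := by
      rw [card_subtype_iff (Q := fun z => τ z ≠ z ∨ z = x) ?_, card_subtype_or_eq (by simp [hx])]
      intro z
      by_cases h1 : z = x
      · subst h1; simp [sPerm, sFun]
      · simp [sPerm, sFun, h1]
    have e2 : Nat.card {b : Bool // sPerm τ hτ (.inr (⟨x, hx⟩, ε)) (Sum.inr b) ≠ Sum.inr b} = 1 := by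
      rw [card_subtype_iff (Q := fun b => b = ε) ?_, card_bool_eq]
      intro b
      by_cases h1 : b = ε <;> simp [sPerm, sFun, h1]
    rw [e1, e2]; all_goals omega

theorem card_fixed_up :
    Nat.card {u : α ⊕ Bool // sPerm τ hτ m u = u} = Nat.card {z : α // τ z = z} := by
  rw [card_subtype_sum]
  rcases m with ⟨x, hx⟩ | ⟨⟨x, hx⟩, ε⟩
  · have e1 : Nat.card {z : α // sPerm τ hτ (.inl ⟨x, hx⟩) (Sum.inl z) = Sum.inl z}
        = Nat.card {z : α // τ z = z} := by
      apply card_subtype_iff; intro z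
      by_cases h1 : z = x
      · subst h1; simp [sPerm, sFun, hx]
      · by_cases h2 : z = τ x
        · subst h2
          have : τ (τ x) ≠ τ x := by rw [hτ]; exact Ne.symm hx
          simp [sPerm, sFun, h1, this]
        · simp [sPerm, sFun, h1, h2]
    have e2 : Nat.card {b : Bool // sPerm τ hτ (.inl ⟨x, hx⟩) (Sum.inr b) = Sum.inr b} = 0 := by
      rw [card_subtype_iff (Q := fun _ => False) (fun b => by cases b <;> simp [sPerm, sFun]),
        card_subtype_false]
    rw [e1, e2]; all_goals omega
  · have e0 : Nat.card {z : α // τ z = z}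
        = Nat.card {z : α // (τ z = z ∧ z ≠ x) ∨ z = x} := by
      apply card_subtype_iff; intro z
      constructor
      · intro h; by_cases h1 : z = x
        · exact Or.inr h1
        · exact Or.inl ⟨h, h1⟩
      · rintro (⟨h, _⟩ | rfl)
        · exact h
        · exact hx
    have e1 : Nat.card {z : α // sPerm τ hτ (.inr (⟨x, hx⟩, ε)) (Sum.inl z) = Sum.inl z}
        = Nat.card {z : α // τ z = z ∧ z ≠ x} := by
      apply card_subtype_iff; intro z
      by_cases h1 : z = x
      · subst h1; simp [sPerm, sFun]
      · simp [sPerm, sFun, h1]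
    have e2 : Nat.card {b : Bool // sPerm τ hτ (.inr (⟨x, hx⟩, ε)) (Sum.inr b) = Sum.inr b} = 1 := by
      rw [card_subtype_iff (Q := fun b => b = !ε) ?_, card_bool_eq]
      intro b
      by_cases h1 : b = ε
      · subst h1; simp [sPerm, sFun]
      · have : b = !ε := by cases b <;> cases ε <;> simp_all
        simp [sPerm, sFun, h1, this]
    rw [e0, card_subtype_or_eq (by simp), e1, e2]; all_goals omega

theorem card_heads_up :
    Nat.card {u : α ⊕ Bool // ∃ t, u ≠ t ∧ Bs D u = some t ∧ Bs D t = none}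
      = Nat.card {z : α // ∃ y, z ≠ y ∧ D z = some y ∧ D y = none} + 1 := by
  rw [card_subtype_sum]
  have e1 : Nat.card {z : α // ∃ t, Sum.inl z ≠ t ∧ Bs D (Sum.inl z) = some t ∧ Bs D t = none}
      = Nat.card {z : α // ∃ y, z ≠ y ∧ D z = some y ∧ D y = none} := by
    apply card_subtype_iff; intro z
    constructor
    · rintro ⟨t, hne, hs, hn⟩
      simp only [Bs, Option.map_eq_some_iff] at hs
      obtain ⟨y, hy, rfl⟩ := hs
      refine ⟨y, fun hc => hne (by rw [hc]), hy, ?_⟩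
      simpa [Bs, Option.map_eq_none_iff] using hn
    · rintro ⟨y, hne, hs, hn⟩
      exact ⟨Sum.inl y, by simpa using hne, by simp [Bs, hs], by simp [Bs, hn]⟩
  have e2 : Nat.card {b : Bool // ∃ t, Sum.inr b ≠ t ∧ Bs D (Sum.inr b) = some t ∧ Bs D t = none}
      = 1 := by
    rw [card_subtype_iff (Q := fun b => b = true) ?_, card_bool_eq]
    intro b
    cases b
    · simp [Bs]
    · simp only [iff_true]
      exact ⟨Sum.inr false, by simp, rfl, rfl⟩
  rw [e1, e2]; all_goals omega

theorem card_bloops_up :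
    Nat.card {u : α ⊕ Bool // Bs D u = some u} = Nat.card {z : α // D z = some z} := by
  rw [card_subtype_sum]
  have e1 : Nat.card {z : α // Bs D (Sum.inl z) = some (Sum.inl z)}
      = Nat.card {z : α // D z = some z} := by
    apply card_subtype_iff; intro z
    simp [Bs, Option.map_eq_some_iff]
  have e2 : Nat.card {b : Bool // Bs D (Sum.inr b) = some (Sum.inr b)} = 0 := by
    rw [card_subtype_iff (Q := fun _ => False) (fun b => by cases b <;> simp [Bs]),
      card_subtype_false]
  rw [e1, e2]; all_goals omega

theorem CT_up {a b c d : ℕ} (h : CT τ D a b c d) :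
    CT (sPerm τ hτ m) (Bs D) (a + 1) (b + 1) c d := by
  obtain ⟨h1, h2, h3, h4⟩ := h
  refine ⟨?_, ?_, ?_, ?_⟩
  · rw [card_moved_up, h1]; ring
  · rw [card_heads_up, h2]
  · rw [card_fixed_up, h3]
  · rw [card_bloops_up, h4]

end UpCount
section Down
variable {α : Type*} [DecidableEq α] [Finite α]

theorem conn_down (τ : Equiv.Perm α) (hτ : ∀ z, τ (τ z) = z) (D : α → Option α) (m : Mk τ)
    (h5 : ∀ a b : α ⊕ Bool, Relation.EqvGen (Rel' (sPerm τ hτ m) (Bs D)) a b) :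
    ∀ z z' : α, Relation.EqvGen (Rel' τ D) z z' := by
  classical
  obtain ⟨x, hx⟩ | ⟨⟨x, hx⟩, ε⟩ := m
  · set proj : α ⊕ Bool → α := Sum.elim id (fun b => if b then x else τ x) with hproj
    have key : ∀ a b : α ⊕ Bool, Rel' (sPerm τ hτ (.inl ⟨x, hx⟩)) (Bs D) a b →
        Relation.EqvGen (Rel' τ D) (proj a) (proj b) := by
      rintro (a | a) (b | b) (hab | hab) <;>
          (try simp only [sPerm_apply, sFun, Bs] at hab) <;>
          simp only [hproj, Sum.elim_inl, Sum.elim_inr, id_eq]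
      · -- inl inl sigma
        by_cases h1 : a = x
        · rw [if_pos h1] at hab; cases hab
        · rw [if_neg h1] at hab
          by_cases h2 : a = τ x
          · rw [if_pos h2] at hab; cases hab
          · rw [if_neg h2] at hab
            exact Relation.EqvGen.rel _ _ (Or.inl (Sum.inl_injective hab))
      · -- inl inl B
        rcases hd : D a with _ | y
        · simp [hd] at hab
        · simp only [hd, Option.map_some] at hab
          obtain rfl : y = b := Sum.inl_injective (Option.some_injective _ hab)
          exact Relation.EqvGen.rel _ _ (Or.inr hd)
      · -- inl inr sigma
        by_cases h1 : a = x
        · rw [if_pos h1] at hab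
          obtain rfl : true = b := Sum.inr_injective hab
          simpa [h1] using Relation.EqvGen.refl (r := Rel' τ D) x
        · rw [if_neg h1] at hab
          by_cases h2 : a = τ x
          · rw [if_pos h2] at hab
            obtain rfl : false = b := Sum.inr_injective hab
            simpa [h2] using Relation.EqvGen.refl (r := Rel' τ D) (τ x)
          · rw [if_neg h2] at hab; cases hab
      · -- inl inr B
        rcases hd : D a with _ | y <;> simp [hd] at hab
      · -- inr inl sigma
        cases a
        · simp only [sPerm_apply, sFun] at hab
          obtain rfl : τ x = b := Sum.inl_injective hab
          simp only [Bool.false_eq_true, if_neg, ite_false]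
          exact Relation.EqvGen.refl _
        · simp only [sPerm_apply, sFun] at hab
          obtain rfl : x = b := Sum.inl_injective hab
          simp only [if_pos]
          exact Relation.EqvGen.refl _
      · -- inr inl B
        cases a
        · cases hab
        · simp [Bs] at hab
      · -- inr inr sigma
        cases a <;> simp only [sPerm_apply, sFun] at hab <;> cases hab
      · -- inr inr B
        cases a
        · cases hab
        · have : (Sum.inr false : α ⊕ Bool) = Sum.inr b := Option.some_injective _ hab
          obtain rfl : false = b := Sum.inr_injective this
          simp only [if_pos, Bool.false_eq_true, ite_false]
          exact Relation.EqvGen.rel _ _ (Or.inl rfl)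
    intro z z'
    have := eqvGen_map' proj key (h5 (Sum.inl z) (Sum.inl z'))
    simpa [hproj] using this
  · set proj : α ⊕ Bool → α := Sum.elim id (fun _ => x) with hproj
    have key : ∀ a b : α ⊕ Bool, Rel' (sPerm τ hτ (.inr (⟨x, hx⟩, ε))) (Bs D) a b →
        Relation.EqvGen (Rel' τ D) (proj a) (proj b) := by
      rintro (a | a) (b | b) (hab | hab) <;>
          (try simp only [sPerm_apply, sFun, Bs] at hab) <;>
          simp only [hproj, Sum.elim_inl, Sum.elim_inr, id_eq]
      · -- inl inl sigma
        by_cases h1 : a = x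
        · rw [if_pos h1] at hab; cases hab
        · rw [if_neg h1] at hab
          exact Relation.EqvGen.rel _ _ (Or.inl (Sum.inl_injective hab))
      · -- inl inl B
        rcases hd : D a with _ | y
        · simp [hd] at hab
        · simp only [hd, Option.map_some] at hab
          obtain rfl : y = b := Sum.inl_injective (Option.some_injective _ hab)
          exact Relation.EqvGen.rel _ _ (Or.inr hd)
      · -- inl inr sigma
        by_cases h1 : a = x
        · simpa [h1] using Relation.EqvGen.refl (r := Rel' τ D) x
        · rw [if_neg h1] at hab; cases hab
      · -- inl inr B
        rcases hd : D a with _ | y <;> simp [hd] at hab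
      · -- inr inl sigma
        by_cases h1 : a = ε
        · rw [if_pos h1] at hab
          obtain rfl : x = b := Sum.inl_injective hab
          exact Relation.EqvGen.refl x
        · rw [if_neg h1] at hab; cases hab
      · -- inr inl B
        cases a
        · cases hab
        · simp [Bs] at hab
      · -- inr inr sigma
        exact Relation.EqvGen.refl _
      · -- inr inr B
        exact Relation.EqvGen.refl _
    intro z z'
    have := eqvGen_map' proj key (h5 (Sum.inl z) (Sum.inl z'))
    simpa [hproj] using this

theorem CR_down (τ : Equiv.Perm α) (hτ : ∀ z, τ (τ z) = z) (D : α → Option α) (m : Mk τ)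
    (h : CR (sPerm τ hτ m) (Bs D)) : CR τ D := by
  obtain ⟨h1, h2, h3, h4, h5⟩ := h
  refine ⟨hτ, ?_, ?_, ?_, conn_down τ hτ D m h5⟩
  · intro v w u hv hw
    have := h2 (Sum.inl v) (Sum.inl w) (Sum.inl u) (by simp [Bs, hv]) (by simp [Bs, hw])
    exact Sum.inl_injective this
  · intro v w u hv hw
    have := h3 (Sum.inl v) (Sum.inl w) (Sum.inl u) (by simp [Bs, hv]) (by simp [Bs, hw])
    simpa [Bs, Option.map_eq_some_iff] using this
  · intro v
    rcases h4 (Sum.inl v) with hv | ⟨u, hu⟩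
    · left; simpa [Bs, Option.map_eq_none_iff] using hv
    · right
      rcases u with z | b
      · refine ⟨z, ?_⟩
        simpa [Bs, Option.map_eq_some_iff] using hu
      · exfalso; cases b
        · simp [Bs] at hu
        · rw [show (Bs D (Sum.inr true)) = some (Sum.inr false) from rfl] at hu
          cases Option.some_injective _ hu

end Down
section Recover
variable {α : Type*} [DecidableEq α] [Finite α]

theorem recover [Nonempty α] {σt : Equiv.Perm (α ⊕ Bool)} {Bt : α ⊕ Bool → Option (α ⊕ Bool)}
    (h : CR σt Bt) (ht : Bt (Sum.inr true) = some (Sum.inr false))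
    (hf : Bt (Sum.inr false) = none) :
    ∃ (τ : Equiv.Perm α) (hτ : ∀ z, τ (τ z) = z) (D : α → Option α) (m : Mk τ),
      (∀ u, σt u = sPerm τ hτ m u) ∧ Bt = Bs D := by
  obtain ⟨h1, h2, h3, h4, h5⟩ := h
  -- nothing maps to (inr true)
  have hnotrue : ∀ u, Bt u ≠ some (Sum.inr true) := by
    intro u hu
    have := h3 _ _ _ hu ht
    rw [hf] at this; cases this
  have honly : ∀ u, Bt u = some (Sum.inr false) → u = Sum.inr true := fun u hu => h2 _ _ _ hu ht
  -- extract D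
  have hD : ∀ z, ∃ o : Option α, Bt (Sum.inl z) = o.map Sum.inl := by
    intro z
    rcases hb : Bt (Sum.inl z) with _ | (y | c)
    · exact ⟨none, rfl⟩
    · exact ⟨some y, rfl⟩
    · cases c
      · exact absurd (honly _ hb) (by simp)
      · exact absurd hb (hnotrue _)
  choose D hDspec using hD
  have hBt : Bt = Bs D := by
    funext u
    rcases u with z | b
    · rw [hDspec z]; rfl
    · cases b
      · exact hf
      · exact ht
  -- exclude the bad configurations
  have hbad : ¬ (∀ b : Bool, σt (Sum.inr b) = Sum.inr true ∨ σt (Sum.inr b) = Sum.inr false) := by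
    intro hC
    have hone : ∀ a b', Rel' σt Bt a b' →
        ((a = Sum.inr true ∨ a = Sum.inr false) ↔ (b' = Sum.inr true ∨ b' = Sum.inr false)) := by
      rintro a b' (hs | hb)
      · constructor
        · rintro (rfl | rfl) <;> rw [← hs] <;> exact hC _
        · intro hcb
          have ha : a = σt b' := by rw [← hs, h1]
          rcases hcb with rfl | rfl <;> rw [ha] <;> exact hC _
      · constructor
        · rintro (rfl | rfl)
          · rw [ht] at hb; right; exact (Option.some_injective _ hb).symm
          · rw [hf] at hb; cases hb
        · rintro (rfl | rfl)
          · exact absurd hb (hnotrue _)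
          · left; exact honly _ hb
    have hiff : ∀ a b', Relation.EqvGen (Rel' σt Bt) a b' →
        ((a = Sum.inr true ∨ a = Sum.inr false) ↔ (b' = Sum.inr true ∨ b' = Sum.inr false)) := by
      intro a b' hab
      induction hab with
      | rel x y hxy => exact hone _ _ hxy
      | refl x => exact Iff.rfl
      | symm x y _ ih => exact ih.symm
      | trans x y z _ _ ih1 ih2 => exact ih1.trans ih2
    have := (hiff _ _ (h5 (Sum.inl (Classical.arbitrary α)) (Sum.inr true))).mpr (Or.inl rfl)
    rcases this with hcc | hcc <;> cases hcc
  rcases hvt : σt (Sum.inr true) with x0 | c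
  · -- σt (inr true) = inl x0
    have hvt' : σt (Sum.inl x0) = Sum.inr true := by rw [← hvt, h1]
    rcases hwf : σt (Sum.inr false) with y0 | c'
    · -- case (a): isolated a-edge mark
      have hwf' : σt (Sum.inl y0) = Sum.inr false := by rw [← hwf, h1]
      have hxy : x0 ≠ y0 := by intro hc; rw [hc, hwf'] at hvt'; cases hvt'
      have shape : ∀ z, z ≠ x0 → z ≠ y0 → ∃ c, σt (Sum.inl z) = Sum.inl c := by
        intro z hz1 hz2
        rcases hc : σt (Sum.inl z) with c | c
        · exact ⟨c, rfl⟩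
        · exfalso; cases c
          · exact hz2 (Sum.inl_injective (σt.injective (hc.trans hwf'.symm)))
          · exact hz1 (Sum.inl_injective (σt.injective (hc.trans hvt'.symm)))
      set t : α → α := fun z => Sum.elim id (fun b => if b then y0 else x0) (σt (Sum.inl z))
        with hts
      have ht1 : t x0 = y0 := by simp [hts, hvt']
      have ht2 : t y0 = x0 := by simp [hts, hwf']
      have htg : ∀ z c, σt (Sum.inl z) = Sum.inl c → t z = c := by
        intro z c hc; simp [hts, hc]
      have hinv : Function.Involutive t := by
        intro z
        by_cases hz1 : z = x0
        · subst hz1; rw [ht1, ht2]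
        by_cases hz2 : z = y0
        · subst hz2; rw [ht2, ht1]
        obtain ⟨c, hc⟩ := shape z hz1 hz2
        rw [htg z c hc]
        exact htg c z (by rw [← hc, h1])
      refine ⟨hinv.toPerm, hinv, D, Sum.inl ⟨x0, ?_⟩, ?_, hBt⟩
      · show t x0 ≠ x0; rw [ht1]; exact Ne.symm hxy
      · rintro (z | b)
        · show σt (Sum.inl z) =
            if z = x0 then Sum.inr true else if z = t x0 then Sum.inr false else Sum.inl (t z)
          rw [ht1]
          by_cases hz1 : z = x0
          · rw [if_pos hz1, hz1, hvt']
          · rw [if_neg hz1]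
            by_cases hz2 : z = y0
            · rw [if_pos hz2, hz2, hwf']
            · rw [if_neg hz2]
              obtain ⟨c, hc⟩ := shape z hz1 hz2
              rw [hc, htg z c hc]
        · cases b
          · show σt (Sum.inr false) = Sum.inl (t x0); rw [ht1]; exact hwf
          · show σt (Sum.inr true) = Sum.inl x0; exact hvt
    · -- σt (inr false) = inr c'
      cases c'
      · -- case (b): a-loop mark, edge to (inr true)
        have shape : ∀ z, z ≠ x0 → ∃ c, σt (Sum.inl z) = Sum.inl c := by
          intro z hz1
          rcases hc : σt (Sum.inl z) with c | c
          · exact ⟨c, rfl⟩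
          · exfalso; cases c
            · exact absurd (σt.injective (hc.trans hwf.symm)) (by simp)
            · exact hz1 (Sum.inl_injective (σt.injective (hc.trans hvt'.symm)))
        set t : α → α := fun z => Sum.elim id (fun _ => x0) (σt (Sum.inl z)) with hts
        have ht1 : t x0 = x0 := by simp [hts, hvt']
        have htg : ∀ z c, σt (Sum.inl z) = Sum.inl c → t z = c := by
          intro z c hc; simp [hts, hc]
        have hinv : Function.Involutive t := by
          intro z
          by_cases hz1 : z = x0
          · subst hz1; rw [ht1, ht1]
          obtain ⟨c, hc⟩ := shape z hz1
          rw [htg z c hc]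
          exact htg c z (by rw [← hc, h1])
        refine ⟨hinv.toPerm, hinv, D, Sum.inr (⟨x0, ht1⟩, true), ?_, hBt⟩
        rintro (z | b)
        · show σt (Sum.inl z) = if z = x0 then Sum.inr true else Sum.inl (t z)
          by_cases hz1 : z = x0
          · rw [if_pos hz1, hz1, hvt']
          · rw [if_neg hz1]
            obtain ⟨c, hc⟩ := shape z hz1
            rw [hc, htg z c hc]
        · cases b
          · show σt (Sum.inr false) = Sum.inr false; exact hwf
          · show σt (Sum.inr true) = Sum.inl x0; exact hvt
      · -- σt (inr false) = inr true: impossible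
        exfalso
        have : σt (Sum.inr false) = Sum.inr true := hwf
        have h2' : σt (Sum.inr true) = Sum.inr false := by rw [← this, h1]
        rw [hvt] at h2'; cases h2'
  · -- σt (inr true) = inr c
    cases c
    · -- σt (inr true) = inr false : bad
      exfalso
      apply hbad
      intro b; cases b
      · left; rw [← hvt, h1]
      · right; exact hvt
    · -- σt (inr true) = inr true
      rcases hwf : σt (Sum.inr false) with x0 | c'
      · -- case (c): a-loop mark, edge to (inr false)
        have hwf' : σt (Sum.inl x0) = Sum.inr false := by rw [← hwf, h1]
        have shape : ∀ z, z ≠ x0 → ∃ c, σt (Sum.inl z) = Sum.inl c := by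
          intro z hz1
          rcases hc : σt (Sum.inl z) with c | c
          · exact ⟨c, rfl⟩
          · exfalso; cases c
            · exact hz1 (Sum.inl_injective (σt.injective (hc.trans hwf'.symm)))
            · exact absurd (σt.injective (hc.trans hvt.symm)) (by simp)
        set t : α → α := fun z => Sum.elim id (fun _ => x0) (σt (Sum.inl z)) with hts
        have ht1 : t x0 = x0 := by simp [hts, hwf']
        have htg : ∀ z c, σt (Sum.inl z) = Sum.inl c → t z = c := by
          intro z c hc; simp [hts, hc]
        have hinv : Function.Involutive t := by
          intro z
          by_cases hz1 : z = x0
          · subst hz1; rw [ht1, ht1]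
          obtain ⟨c, hc⟩ := shape z hz1
          rw [htg z c hc]
          exact htg c z (by rw [← hc, h1])
        refine ⟨hinv.toPerm, hinv, D, Sum.inr (⟨x0, ht1⟩, false), ?_, hBt⟩
        rintro (z | b)
        · show σt (Sum.inl z) = if z = x0 then Sum.inr false else Sum.inl (t z)
          by_cases hz1 : z = x0
          · rw [if_pos hz1, hz1, hwf']
          · rw [if_neg hz1]
            obtain ⟨c, hc⟩ := shape z hz1
            rw [hc, htg z c hc]
        · cases b
          · show σt (Sum.inr false) = Sum.inl x0; exact hwf
          · show σt (Sum.inr true) = Sum.inr true; exact hvt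
      · cases c'
        · -- both inr-fixed: bad
          exfalso
          apply hbad
          intro b; cases b
          · right; exact hwf
          · left; exact hvt
        · -- σt (inr false) = inr true = σt (inr true): injectivity
          exfalso
          have := σt.injective (hvt.trans hwf.symm)
          simp at this

end Recover
section Psi
variable {N M : ℕ}

def psiFun (v w : Fin N) (e : Fin M → {u : Fin N // u ∈ ({v, w}ᶜ : Finset (Fin N))}) :
    Fin M ⊕ Bool → Fin N :=
  Sum.elim (fun z => (e z).1) (fun b => if b then v else w)

theorem card_compl2 (v w : Fin N) (h : v ≠ w) (hM : M + 2 = N) :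
    ({v, w}ᶜ : Finset (Fin N)).card = M := by
  rw [Finset.card_compl]
  rw [Finset.card_insert_of_notMem (by simp [h]), Finset.card_singleton]
  simp only [Fintype.card_fin]
  omega

noncomputable def psi (v w : Fin N) (h : v ≠ w) (hM : M + 2 = N) : (Fin M ⊕ Bool) ≃ Fin N := by
  refine Equiv.ofBijective
    (psiFun v w (fun z => (Finset.equivFinOfCardEq (card_compl2 v w h hM)).symm z)) ⟨?_, ?_⟩
  · set e := (Finset.equivFinOfCardEq (card_compl2 v w h hM)).symm with he
    have hmem : ∀ z, (e z).1 ≠ v ∧ (e z).1 ≠ w := by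
      intro z
      have := (e z).2
      simp only [Finset.mem_compl, Finset.mem_insert, Finset.mem_singleton] at this
      exact ⟨fun hc => this (Or.inl hc), fun hc => this (Or.inr hc)⟩
    rintro (z | b) (z' | b') hzz <;> simp only [psiFun, Sum.elim_inl, Sum.elim_inr] at hzz
    · rw [show z = z' from e.injective (Subtype.ext hzz)]
    · exfalso; cases b'
      · exact (hmem z).2 hzz
      · exact (hmem z).1 hzz
    · exfalso; cases b
      · exact (hmem z').2 hzz.symm
      · exact (hmem z').1 hzz.symm
    · cases b <;> cases b' <;> simp_all
      exact h hzz.symm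
  · intro u
    by_cases h1 : u = v
    · exact ⟨Sum.inr true, by simp [psiFun, h1]⟩
    · by_cases h2 : u = w
      · exact ⟨Sum.inr false, by simp [psiFun, h2]⟩
      · have hu : u ∈ ({v, w}ᶜ : Finset (Fin N)) := by simp [h1, h2]
        refine ⟨Sum.inl ((Finset.equivFinOfCardEq (card_compl2 v w h hM)) ⟨u, hu⟩), ?_⟩
        simp [psiFun]

@[simp] theorem psi_inr_true (v w : Fin N) (h : v ≠ w) (hM : M + 2 = N) :
    psi v w h hM (Sum.inr true) = v := rfl

@[simp] theorem psi_inr_false (v w : Fin N) (h : v ≠ w) (hM : M + 2 = N) :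
    psi v w h hM (Sum.inr false) = w := rfl

end Psi
section Counting

theorem card_sigma_const {ι : Type*} [Finite ι] {f : ι → Type*} [∀ i, Finite (f i)] {k : ℕ}
    (h : ∀ i, Nat.card (f i) = k) : Nat.card (Σ i, f i) = Nat.card ι * k := by
  classical
  cases nonempty_fintype ι
  letI : ∀ i, Fintype (f i) := fun i => Fintype.ofFinite _
  rw [Nat.card_eq_fintype_card, Fintype.card_sigma, Nat.card_eq_fintype_card]
  have hk : ∀ i, Fintype.card (f i) = k := fun i => by
    rw [← Nat.card_eq_fintype_card, h]
  simp only [hk, Finset.sum_const, Finset.card_univ, smul_eq_mul]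

theorem card_pairs (N : ℕ) :
    Nat.card {vw : Fin N × Fin N // vw.1 ≠ vw.2} = N * N - N := by
  classical
  rw [Nat.card_eq_fintype_card]
  have h1 : Fintype.card {vw : Fin N × Fin N // vw.1 = vw.2} = N := by
    have e : {vw : Fin N × Fin N // vw.1 = vw.2} ≃ Fin N :=
      { toFun := fun x => x.1.1, invFun := fun v => ⟨(v, v), rfl⟩,
        left_inv := by rintro ⟨⟨a, b⟩, hab⟩; cases hab; rfl,
        right_inv := fun v => rfl }
    rw [Fintype.card_congr e, Fintype.card_fin]
  calc Fintype.card {vw : Fin N × Fin N // ¬ vw.1 = vw.2}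
      = Fintype.card (Fin N × Fin N) - Fintype.card {vw : Fin N × Fin N // vw.1 = vw.2} :=
        Fintype.card_subtype_compl _
    _ = N * N - N := by rw [h1]; simp

theorem card_Mk {α : Type*} [Finite α] (τ : Equiv.Perm α) {k2 l2 : ℕ}
    (h1 : Nat.card {x // τ x ≠ x} = 2 * k2) (h2 : Nat.card {x // τ x = x} = l2) :
    Nat.card (Mk τ) = 2 * k2 + 2 * l2 := by
  rw [Mk, Nat.card_sum, Nat.card_prod, h1, h2, Nat.card_eq_fintype_card, Fintype.card_bool]
  ring

theorem sigma_subtype_ext {ι X : Type*} {P : ι → X → Prop} {a1 a2 : ι}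
    {b1 : {x // P a1 x}} {b2 : {x // P a2 x}} (h : a1 = a2) (h2 : b1.1 = b2.1) :
    (⟨a1, b1⟩ : Σ i, {x // P i x}) = ⟨a2, b2⟩ := by
  subst h
  cases Subtype.ext h2
  rfl

end Counting

section ZeroCase

theorem k2_zero_empty {N K3 L2 L3 : ℕ} (hN : 3 ≤ N) (hK3 : 1 ≤ K3)
    (σ : Equiv.Perm (Fin N)) (B : Fin N → Option (Fin N))
    (hCR : CR σ B) (hCT : CT σ B 0 K3 L2 L3) : False := by
  classical
  obtain ⟨h1, h2, h3, h4, h5⟩ := hCR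
  obtain ⟨c1, c2, c3, c4⟩ := hCT
  -- σ is the identity
  have hid : ∀ v, σ v = v := by
    intro v
    by_contra hv
    have : Nonempty {v : Fin N // σ v ≠ v} := ⟨⟨v, hv⟩⟩
    have := Nat.card_pos (α := {v : Fin N // σ v ≠ v})
    omega
  -- there is an isolated b-edge
  have : Nonempty {v : Fin N // ∃ w, v ≠ w ∧ B v = some w ∧ B w = none} := by
    refine (Nat.card_pos_iff.mp ?_).1
    omega
  obtain ⟨⟨v, w, hvw, hBv, hBw⟩⟩ := this
  -- closure of {v, w}
  have hone : ∀ a b, (fun x y => σ x = y ∨ B x = some y) a b →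
      ((a = v ∨ a = w) ↔ (b = v ∨ b = w)) := by
    rintro a b (hs | hb)
    · rw [hid] at hs; subst hs; exact Iff.rfl
    · constructor
      · rintro (rfl | rfl)
        · rw [hBv] at hb; right; exact (Option.some_injective _ hb).symm
        · rw [hBw] at hb; cases hb
      · rintro (rfl | rfl)
        · exfalso
          have := h3 _ _ _ hb hBv
          rw [hBw] at this; cases this
        · left; exact h2 _ _ _ hb hBv
  have hiff : ∀ a b, Relation.EqvGen (fun x y => σ x = y ∨ B x = some y) a b →
      ((a = v ∨ a = w) ↔ (b = v ∨ b = w)) := by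
    intro a b hab
    induction hab with
    | rel x y hxy => exact hone _ _ hxy
    | refl x => exact Iff.rfl
    | symm x y _ ih => exact ih.symm
    | trans x y z _ _ ih1 ih2 => exact ih1.trans ih2
  have hall : ∀ u : Fin N, u = v ∨ u = w := fun u => (hiff _ _ (h5 u v)).mpr (Or.inl rfl)
  have hsub : (Finset.univ : Finset (Fin N)) ⊆ {v, w} := by
    intro u _
    rcases hall u with rfl | rfl <;> simp
  have := Finset.card_le_card hsub
  rw [Finset.card_univ, Fintype.card_fin] at this
  have h2card : ({v, w} : Finset (Fin N)).card ≤ 2 :=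
    le_trans (Finset.card_insert_le _ _) (by simp)
  omega

end ZeroCase
section InjHelpers
variable {α : Type*} [DecidableEq α]

instance {β : Type*} [Finite β] (τ : Equiv.Perm β) : Finite (Mk τ) :=
  inferInstanceAs (Finite ({x // τ x ≠ x} ⊕ ({x // τ x = x} × Bool)))

theorem Bs_inj {D1 D2 : α → Option α} (h : Bs D1 = Bs D2) : D1 = D2 := by
  funext z
  have := congrFun h (Sum.inl z)
  simp only [Bs] at this
  exact Option.map_injective Sum.inl_injective this

theorem mapB_inj {V W : Type*} (e : V ≃ W) {B1 B2 : V → Option V}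
    (h : mapB e B1 = mapB e B2) : B1 = B2 := by
  funext z
  have := congrFun h (e z)
  simp only [mapB, Equiv.symm_apply_apply] at this
  exact Option.map_injective e.injective this

theorem permCongr_cancel {V W : Type*} (e : V ≃ W) (σ : Equiv.Perm W) :
    e.permCongr (e.symm.permCongr σ) = σ := by
  ext w
  simp [Equiv.permCongr_apply]

theorem mapB_cancel {V W : Type*} (e : V ≃ W) (B : W → Option W) :
    mapB e (mapB e.symm B) = B := by
  funext w
  simp [mapB, Option.map_map, Function.comp_def]

theorem sFun_inj {τ1 τ2 : Equiv.Perm α} (h1 : ∀ z, τ1 (τ1 z) = z)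
    (h2 : ∀ z, τ2 (τ2 z) = z) {m1 : Mk τ1} {m2 : Mk τ2}
    (h : ∀ u, sFun τ1 m1 u = sFun τ2 m2 u) : τ1 = τ2 ∧ HEq m1 m2 := by
  rcases m1 with ⟨x1, hx1⟩ | ⟨⟨x1, hx1⟩, ε1⟩ <;> rcases m2 with ⟨x2, hx2⟩ | ⟨⟨x2, hx2⟩, ε2⟩
  · -- both edge marks
    have e1 := h (Sum.inr true)
    simp only [sFun] at e1
    obtain rfl : x1 = x2 := Sum.inl_injective e1
    have e2 := h (Sum.inr false)
    simp only [sFun] at e2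
    have hτx : τ1 x1 = τ2 x1 := Sum.inl_injective e2
    have hττ : τ1 = τ2 := by
      ext z
      by_cases hz1 : z = x1
      · subst hz1; exact hτx
      by_cases hz2 : z = τ1 x1
      · subst hz2
        have : τ2 (τ1 x1) = x1 := by rw [hτx]; exact h2 x1
        exact (h1 x1).trans this.symm
      have hz2' : ¬ z = τ2 x1 := by rw [← hτx]; exact hz2
      have e3 := h (Sum.inl z)
      simp only [sFun, if_neg hz1, if_neg hz2, if_neg hz2'] at e3
      exact Sum.inl_injective e3
    subst hττ
    exact ⟨rfl, heq_of_eq rfl⟩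
  · -- edge vs loop: impossible
    exfalso
    cases ε2
    · have e1 := h (Sum.inr true)
      simp only [sFun] at e1
      cases e1
    · have e2 := h (Sum.inr false)
      simp only [sFun] at e2
      cases e2
  · -- loop vs edge: impossible
    exfalso
    cases ε1
    · have e1 := h (Sum.inr true)
      simp only [sFun] at e1
      cases e1
    · have e2 := h (Sum.inr false)
      simp only [sFun] at e2
      cases e2
  · -- both loop marks
    have hee : ε1 = ε2 := by
      cases ε1 <;> cases ε2
      · rfl
      · exact absurd (h (Sum.inr false)) (by simp [sFun])
      · exact absurd (h (Sum.inr true)) (by simp [sFun])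
      · rfl
    subst hee
    have e1 := h (Sum.inr ε1)
    simp only [sFun, if_pos rfl] at e1
    obtain rfl : x1 = x2 := Sum.inl_injective e1
    have hττ : τ1 = τ2 := by
      ext z
      by_cases hz1 : z = x1
      · subst hz1; exact hx1.trans hx2.symm
      · have e3 := h (Sum.inl z)
        simp only [sFun, if_neg hz1] at e3
        exact Sum.inl_injective e3
    subst hττ
    exact ⟨rfl, heq_of_eq rfl⟩

theorem mapB_psi_v {M : ℕ} (v w : Fin (M + 2)) (h : v ≠ w) (D : Fin M → Option (Fin M)) :
    mapB (psi v w h rfl) (Bs D) v = some w := by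
  have h1 : (psi v w h rfl).symm v = Sum.inr true := by
    rw [Equiv.symm_apply_eq]; rfl
  show (Bs D ((psi v w h rfl).symm v)).map _ = some w
  rw [h1]
  rfl

theorem mapB_psi_w {M : ℕ} (v w : Fin (M + 2)) (h : v ≠ w) (D : Fin M → Option (Fin M)) :
    mapB (psi v w h rfl) (Bs D) w = none := by
  have h1 : (psi v w h rfl).symm w = Sum.inr false := by
    rw [Equiv.symm_apply_eq]; rfl
  show (Bs D ((psi v w h rfl).symm w)).map _ = none
  rw [h1]
  rfl

end InjHelpers
section MainSec
variable (M K2 K3 L2 L3 : ℕ)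

abbrev SBig := {p : Equiv.Perm (Fin (M + 2)) × (Fin (M + 2) → Option (Fin (M + 2))) //
  IsCycRed p.1 p.2 ∧ HasCombType p.1 p.2 (K2 + 1) (K3 + 1) L2 L3}

abbrev SSmall := {q : Equiv.Perm (Fin M) × (Fin M → Option (Fin M)) //
  IsCycRed q.1 q.2 ∧ HasCombType q.1 q.2 K2 K3 L2 L3}

abbrev ASide := Σ p : SBig M K2 K3 L2 L3,
  {v : Fin (M + 2) // ∃ w, v ≠ w ∧ p.1.2 v = some w ∧ p.1.2 w = none}

abbrev BSide := Σ q : SSmall M K2 K3 L2 L3,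
  ({vw : Fin (M + 2) × Fin (M + 2) // vw.1 ≠ vw.2} × Mk q.1.1)

noncomputable def Fmap (b : BSide M K2 K3 L2 L3) : ASide M K2 K3 L2 L3 :=
  ⟨⟨((psi b.2.1.1.1 b.2.1.1.2 b.2.1.2 rfl).permCongr (sPerm b.1.1.1 b.1.2.1.1 b.2.2),
      mapB (psi b.2.1.1.1 b.2.1.1.2 b.2.1.2 rfl) (Bs b.1.1.2)),
    CR_map _ (CR_up _ _ _ _ b.1.2.1), CT_map _ (CT_up _ _ _ _ b.1.2.2)⟩,
   ⟨b.2.1.1.1, b.2.1.1.2, b.2.1.2, mapB_psi_v _ _ _ _, mapB_psi_w _ _ _ _⟩⟩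

theorem Fmap_inj : Function.Injective (Fmap M K2 K3 L2 L3) := by
  intro b1 b2 heq
  obtain ⟨⟨⟨τ1, D1⟩, hq1⟩, ⟨⟨⟨v1, w1⟩, hvw1⟩, m1⟩⟩ := b1
  obtain ⟨⟨⟨τ2, D2⟩, hq2⟩, ⟨⟨⟨v2, w2⟩, hvw2⟩, m2⟩⟩ := b2
  have hv : v1 = v2 := congrArg (fun x => x.2.1) heq
  subst hv
  have hfst : ((psi v1 w1 hvw1 rfl).permCongr (sPerm τ1 hq1.1.1 m1),
      mapB (psi v1 w1 hvw1 rfl) (Bs D1))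
      = ((psi v1 w2 hvw2 rfl).permCongr (sPerm τ2 hq2.1.1 m2),
      mapB (psi v1 w2 hvw2 rfl) (Bs D2)) := congrArg (fun x => x.1.1) heq
  have hB : mapB (psi v1 w1 hvw1 rfl) (Bs D1) = mapB (psi v1 w2 hvw2 rfl) (Bs D2) :=
    congrArg (fun p => p.2) hfst
  have hw : w1 = w2 := by
    have e1 := mapB_psi_v v1 w1 hvw1 D1
    have e2 := mapB_psi_v v1 w2 hvw2 D2
    have : some w1 = some w2 := by rw [← e1, ← e2, hB]
    exact Option.some_injective _ this
  subst hw
  have hD : D1 = D2 := Bs_inj (mapB_inj (psi v1 w1 hvw1 rfl) hB)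
  subst hD
  have hperm : (psi v1 w1 hvw1 rfl).permCongr (sPerm τ1 hq1.1.1 m1)
      = (psi v1 w1 hvw1 rfl).permCongr (sPerm τ2 hq2.1.1 m2) := congrArg (fun p => p.1) hfst
  have hsp : sPerm τ1 hq1.1.1 m1 = sPerm τ2 hq2.1.1 m2 :=
    (Equiv.permCongr (psi v1 w1 hvw1 rfl)).injective hperm
  have hfun : ∀ u, sFun τ1 m1 u = sFun τ2 m2 u := fun u => congrArg (fun π => π u) hsp
  obtain ⟨hτ, hm⟩ := sFun_inj hq1.1.1 hq2.1.1 hfun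
  subst hτ
  have hmm : m1 = m2 := eq_of_heq hm
  subst hmm
  rfl

theorem Fmap_surj (hM : 1 ≤ M) : Function.Surjective (Fmap M K2 K3 L2 L3) := by
  intro a
  obtain ⟨⟨⟨σ', B'⟩, hCRb, hCTb⟩, ⟨v, hv⟩⟩ := a
  obtain ⟨w, hvw, hBv, hBw⟩ := hv
  replace hBv : B' v = some w := hBv
  replace hBw : B' w = none := hBw
  have hne : Nonempty (Fin M) := ⟨⟨0, hM⟩⟩
  have hCRt : CR ((psi v w hvw rfl).symm.permCongr σ') (mapB (psi v w hvw rfl).symm B') :=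
    CR_map _ hCRb
  have ht : mapB (psi v w hvw rfl).symm B' (Sum.inr true) = some (Sum.inr false) := by
    show (B' ((psi v w hvw rfl).symm.symm (Sum.inr true))).map _ = _
    rw [Equiv.symm_symm]
    rw [show (psi v w hvw rfl) (Sum.inr true) = v from rfl, hBv]
    show some ((psi v w hvw rfl).symm w) = _
    congr 1
    rw [Equiv.symm_apply_eq]; rfl
  have hf : mapB (psi v w hvw rfl).symm B' (Sum.inr false) = none := by
    show (B' ((psi v w hvw rfl).symm.symm (Sum.inr false))).map _ = _
    rw [Equiv.symm_symm]
    rw [show (psi v w hvw rfl) (Sum.inr false) = w from rfl, hBw]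
    rfl
  obtain ⟨τ, hτ, D, m, hσ, hBt⟩ := recover hCRt ht hf
  have hσe : (psi v w hvw rfl).symm.permCongr σ' = sPerm τ hτ m := Equiv.ext hσ
  have hCRs : CR τ D := CR_down τ hτ D m (by rw [← hσe, ← hBt]; exact hCRt)
  have hCTt : CT ((psi v w hvw rfl).symm.permCongr σ') (mapB (psi v w hvw rfl).symm B')
      (K2 + 1) (K3 + 1) L2 L3 := CT_map _ hCTb
  rw [hσe, hBt] at hCTt
  obtain ⟨c1, c2, c3, c4⟩ := hCTt
  rw [card_moved_up] at c1
  rw [card_heads_up] at c2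
  rw [card_fixed_up] at c3
  rw [card_bloops_up] at c4
  have hCTs : CT τ D K2 K3 L2 L3 := ⟨by omega, by omega, c3, c4⟩
  refine ⟨⟨⟨(τ, D), hCRs, hCTs⟩, (⟨(v, w), hvw⟩, m)⟩, ?_⟩
  simp only [Fmap]
  refine sigma_subtype_ext (P := fun (p : SBig M K2 K3 L2 L3) (v : Fin (M + 2)) =>
    ∃ w, v ≠ w ∧ p.1.2 v = some w ∧ p.1.2 w = none) ?_ ?_
  · apply Subtype.ext
    refine Prod.ext ?_ ?_
    · show (psi v w hvw rfl).permCongr (sPerm τ _ m) = σ'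
      calc (psi v w hvw rfl).permCongr (sPerm τ _ m)
          = (psi v w hvw rfl).permCongr ((psi v w hvw rfl).symm.permCongr σ') := by rw [hσe]
        _ = σ' := permCongr_cancel _ _
    · show mapB (psi v w hvw rfl) (Bs D) = B'
      rw [← hBt, mapB_cancel]
  · rfl

theorem main_card (hM : 1 ≤ M) :
    (K3 + 1) * Nat.card (SBig M K2 K3 L2 L3)
      = ((M + 2) * (M + 2) - (M + 2)) * (2 * K2 + 2 * L2) *
        Nat.card (SSmall M K2 K3 L2 L3) := by
  classical
  have cardA : Nat.card (ASide M K2 K3 L2 L3) = Nat.card (SBig M K2 K3 L2 L3) * (K3 + 1) :=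
    card_sigma_const (fun p => p.2.2.2.1)
  have cardB : Nat.card (BSide M K2 K3 L2 L3) = Nat.card (SSmall M K2 K3 L2 L3) *
      (((M + 2) * (M + 2) - (M + 2)) * (2 * K2 + 2 * L2)) :=
    card_sigma_const (fun q => by rw [Nat.card_prod, card_pairs, card_Mk q.1.1 q.2.2.1 q.2.2.2.2.1])
  have hbij : Nat.card (BSide M K2 K3 L2 L3) = Nat.card (ASide M K2 K3 L2 L3) :=
    Nat.card_congr (Equiv.ofBijective _ ⟨Fmap_inj M K2 K3 L2 L3, Fmap_surj M K2 K3 L2 L3 hM⟩)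
  rw [cardA, cardB] at hbij
  rw [mul_comm (K3 + 1), ← hbij]
  ring

end MainSec
theorem stmt2 (n k2 k3 l2 l3 : ℤ) (hn : 3 ≤ n) (hk2 : 0 ≤ k2) (hk3 : 1 ≤ k3)
    (hl2 : 0 ≤ l2) (hl3 : 0 ≤ l3) :
    k3 * (s n k2 k3 l2 l3 : ℤ) =
      2 * n * (n - 1) * (k2 - 1 + l2) * (s (n - 2) (k2 - 1) (k3 - 1) l2 l3 : ℤ) := by
  by_cases hk20 : k2 = 0
  · subst hk20
    have hleft : s n 0 k3 l2 l3 = 0 := by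
      simp only [s]
      rw [if_pos ⟨by omega, by omega, by omega, by omega, by omega⟩]
      have : IsEmpty {p : Equiv.Perm (Fin n.toNat) × (Fin n.toNat → Option (Fin n.toNat)) //
          IsCycRed p.1 p.2 ∧ HasCombType p.1 p.2 (0 : ℤ).toNat k3.toNat l2.toNat l3.toNat} := by
        refine ⟨fun p => ?_⟩
        exact k2_zero_empty (N := n.toNat) (by omega) (by omega) p.1.1 p.1.2 p.2.1 p.2.2
      exact Nat.card_of_isEmpty
    have hright : s (n - 2) (0 - 1) (k3 - 1) l2 l3 = 0 := by
      simp only [s]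
      rw [if_neg]
      intro hcond
      have := hcond.2.1
      omega
    rw [hleft, hright]
    simp
  · set M := n.toNat - 2 with hMdef
    set K2' := k2.toNat - 1 with hK2def
    set K3' := k3.toNat - 1 with hK3def
    set L2 := l2.toNat with hL2def
    set L3 := l3.toNat with hL3def
    have h1 : n.toNat = M + 2 := by omega
    have h2 : k2.toNat = K2' + 1 := by omega
    have h3 : k3.toNat = K3' + 1 := by omega
    have h4 : (n - 2).toNat = M := by omega
    have h5 : (k2 - 1).toNat = K2' := by omega
    have h6 : (k3 - 1).toNat = K3' := by omega
    have e1 : s n k2 k3 l2 l3 = Nat.card (SBig M K2' K3' L2 L3) := by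
      simp only [s]
      rw [if_pos ⟨by omega, by omega, by omega, by omega, by omega⟩, h1, h2, h3]
    have e2 : s (n - 2) (k2 - 1) (k3 - 1) l2 l3 = Nat.card (SSmall M K2' K3' L2 L3) := by
      simp only [s]
      rw [if_pos ⟨by omega, by omega, by omega, by omega, by omega⟩, h4, h5, h6]
    have hmain := main_card M K2' K3' L2 L3 (by omega)
    have hprod : (M + 2) * (M + 2) - (M + 2) = (M + 2) * (M + 1) := by
      rw [show (M + 2) * (M + 2) = (M + 2) * (M + 1) + (M + 2) by ring]
      exact Nat.add_sub_cancel _ _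
    rw [hprod] at hmain
    rw [e1, e2]
    have hmainZ : ((K3' : ℤ) + 1) * (Nat.card (SBig M K2' K3' L2 L3) : ℤ)
        = ((M : ℤ) + 2) * ((M : ℤ) + 1) * (2 * (K2' : ℤ) + 2 * (L2 : ℤ)) *
          (Nat.card (SSmall M K2' K3' L2 L3) : ℤ) := by exact_mod_cast hmain
    have hk3' : (k3 : ℤ) = (K3' : ℤ) + 1 := by omega
    have hn' : (n : ℤ) = (M : ℤ) + 2 := by omega
    have hk2l2 : (k2 : ℤ) - 1 + l2 = (K2' : ℤ) + (L2 : ℤ) := by omega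
    rw [hk3', hn', hk2l2, hmainZ]
    ring
end

section
/- Let (A, B, v₀) be a rooted reduced graph structure on Fin n, and let π be a permutation of Fin n such that π v₀ = v₀ and for all v ∈ Fin n, A (π v) = Option.map π (A v) and B (π v) = Option.map π (B v). Then π is the identity permutation. (Consequently, every rooted reduced graph of size n admits exactly n! distinct labelings, so the number of finitely generated subgroups of PSL₂(ℤ) of a given combinatorial type is L(τ)/n!.) -/
/-- A rooted reduced graph structure on `Fin n` (the labeled Stallings graph of a finitely
generated subgroup of `PSL₂(ℤ)`) admits no non-trivial label-preserving automorphism fixing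
the root. -/
theorem stmt4 {n : ℕ} (A B : Fin n → Option (Fin n)) (v0 : Fin n)
    (hA : ∀ v w, A v = some w ↔ A w = some v)
    (hBinj : ∀ v w u, B v = some u → B w = some u → v = w)
    (hBtri : ∀ v w u, B v = some w → B w = some u → B u = some v)
    (hroot : ∀ v, v ≠ v0 → A v ≠ none ∧ (B v ≠ none ∨ ∃ u, B u = some v))
    (hconn : ∀ v w : Fin n, Relation.EqvGen (fun x y => A x = some y ∨ B x = some y) v w)
    (π : Equiv.Perm (Fin n)) (hv0 : π v0 = v0)
    (hπA : ∀ v, A (π v) = Option.map π (A v))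
    (hπB : ∀ v, B (π v) = Option.map π (B v)) :
    π = 1 := by
  have step : ∀ x y, (A x = some y ∨ B x = some y) → π x = x → π y = y := by
    intro x y hr hx
    rcases hr with h | h
    · have := hπA x
      rw [hx, h] at this
      simpa using this.symm
    · have := hπB x
      rw [hx, h] at this
      simpa using this.symm
  have step' : ∀ x y, (A x = some y ∨ B x = some y) → π y = y → π x = x := by
    intro x y hr hy
    rcases hr with h | h
    · exact step y x (Or.inl ((hA x y).mp h)) hy
    · have hbx : B (π x) = some y := by
        rw [hπB x, h]; simp [hy]
      exact (hBinj (π x) x y hbx h)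
  have key : ∀ v w, Relation.EqvGen (fun x y => A x = some y ∨ B x = some y) v w →
      (π v = v ↔ π w = w) := by
    intro v w h
    induction h with
    | rel x y hr => exact ⟨step x y hr, step' x y hr⟩
    | refl x => rfl
    | symm x y _ ih => exact ih.symm
    | trans x y z _ _ ih1 ih2 => exact ih1.trans ih2
  ext v
  simp [(key v0 v (hconn v0 v)).mp hv0]
end

section
/- Let H be a subgroup of G, let w ∈ G be an element of infinite order, let y ∈ G and let m ≥ 2 be an integer such that y w^m y⁻¹ ∈ H but y w y⁻¹ ∉ H. Then H is not almost malnormal: there exists z ∈ G with z ∉ H such that H ∩ zHz⁻¹ is infinite. -/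
/-- The free product `(ℤ/2ℤ) ∗ (ℤ/3ℤ)`, isomorphic to the modular group `PSL₂(ℤ)`. -/
abbrev G : Type := Monoid.Coprod (Multiplicative (ZMod 2)) (Multiplicative (ZMod 3))

/-- If some power `w^m` (`m ≥ 2`) of an infinite-order element `w` of `G` lies in `H` after
conjugation by `y`, while `y w y⁻¹ ∉ H`, then `H` is not almost malnormal: there is
`z ∉ H` with `H ∩ zHz⁻¹` infinite. -/
theorem stmt11 (H : Subgroup G) (w y : G) (m : ℕ) (hm : 2 ≤ m)
    (hw : ¬ IsOfFinOrder w)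
    (h1 : y * w ^ m * y⁻¹ ∈ H) (h2 : y * w * y⁻¹ ∉ H) :
    ∃ z : G, z ∉ H ∧ {g : G | g ∈ H ∧ z⁻¹ * g * z ∈ H}.Infinite := by
  refine ⟨y * w * y⁻¹, h2, ?_⟩
  have hu : ¬ IsOfFinOrder (y * w ^ m * y⁻¹) := by
    intro h
    apply hw
    obtain ⟨n, hn, hn1⟩ := isOfFinOrder_iff_pow_eq_one.mp h
    have : (y * w ^ m * y⁻¹) ^ n = y * w ^ (m * n) * y⁻¹ := by
      rw [conj_pow, pow_mul]
    rw [this] at hn1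
    have : w ^ (m * n) = 1 := by
      have := congrArg (fun g => y⁻¹ * g * y) hn1
      simpa [mul_assoc] using this
    exact isOfFinOrder_iff_pow_eq_one.mpr ⟨m * n, by positivity, this⟩
  have hinj : Function.Injective (fun n : ℕ => (y * w ^ m * y⁻¹) ^ n) :=
    injective_pow_iff_not_isOfFinOrder.mpr hu
  apply Set.infinite_of_injective_forall_mem (f := fun n : ℕ => (y * w ^ m * y⁻¹) ^ n) hinj
  intro n
  refine ⟨H.pow_mem h1 n, ?_⟩
  have key : (y * w * y⁻¹)⁻¹ * (y * w ^ m * y⁻¹) ^ n * (y * w * y⁻¹)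
      = (y * w ^ m * y⁻¹) ^ n := by
    have : (y * w ^ m * y⁻¹) ^ n = y * (w ^ m) ^ n * y⁻¹ := by
      rw [conj_pow]
    rw [this]
    group
  rw [key]
  exact H.pow_mem h1 n
end

section
/- Fix n a positive multiple of 6 and σ₃ a permutation of Fin n of order 3 with no fixed points; call the orbits of σ₃ triangles. Let σ₂ be a fixed-point-free involution of Fin n and let J₁, …, J_k be pairwise distinct sets of triangles, each of cardinality at least 2, such that for every i there exists an orbit O_i of the permutation σ₃ ∘ σ₂ meeting every triangle of J_i in exactly one point and meeting no triangle outside J_i. For j = 2, 3 let t_j denote the number of triangles that belong to exactly j of the sets J₁, …, J_k. Then t₂ + t₃ is even. -/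
open Finset

lemma even_card_of_invol {α : Type*} [DecidableEq α] (f : α → α) :
    ∀ s : Finset α, (∀ x ∈ s, f x ∈ s ∧ f (f x) = x ∧ f x ≠ x) → Even s.card := by
  intro s
  induction s using Finset.strongInduction with
  | _ s ih =>
    intro hs
    rcases s.eq_empty_or_nonempty with rfl | ⟨a, ha⟩
    · simp
    · obtain ⟨hfa, hffa, hne⟩ := hs a ha
      have h1 : ({a, f a} : Finset α) ⊆ s := by
        intro x hx
        simp only [Finset.mem_insert, Finset.mem_singleton] at hx
        rcases hx with rfl | rfl <;> assumption
      have hss : s \ {a, f a} ⊂ s :=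
        Finset.sdiff_ssubset h1 ⟨a, by simp⟩
      have hclosed : ∀ x ∈ s \ ({a, f a} : Finset α),
          f x ∈ s \ ({a, f a} : Finset α) ∧ f (f x) = x ∧ f x ≠ x := by
        intro x hx
        simp only [Finset.mem_sdiff, Finset.mem_insert, Finset.mem_singleton] at hx ⊢
        obtain ⟨hxs, hx2⟩ := hx
        obtain ⟨h1', h2', h3'⟩ := hs x hxs
        refine ⟨⟨h1', ?_⟩, h2', h3'⟩
        rintro (h | h)
        · exact hx2 (Or.inr (by rw [← h2', h]))
        · have : f (f x) = f (f a) := by rw [h]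
          rw [h2', hffa] at this
          exact hx2 (Or.inl this)
      have heven := ih _ hss hclosed
      have hcard : (s \ ({a, f a} : Finset α)).card = s.card - 2 := by
        rw [Finset.card_sdiff_of_subset h1]
        congr 1
        rw [Finset.card_insert_of_notMem (by simpa using hne.symm), Finset.card_singleton]
      have hle : 2 ≤ s.card := by
        have := Finset.card_le_card h1
        rwa [Finset.card_insert_of_notMem (by simpa using hne.symm),
          Finset.card_singleton] at this
      obtain ⟨m, hm⟩ := heven
      exact ⟨m + 1, by omega⟩

lemma sameCycle_iff_of_pow_three {n : ℕ} {σ3 : Equiv.Perm (Fin n)} (h3 : σ3 ^ 3 = 1)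
    (x w : Fin n) : σ3.SameCycle x w ↔ w = x ∨ w = σ3 x ∨ w = σ3 (σ3 x) := by
  have h2 : ∀ y : Fin n, (σ3 ^ (2:ℤ)) y = σ3 (σ3 y) := by
    intro y
    rw [show (2:ℤ) = 1 + 1 by norm_num, zpow_add, zpow_one, Equiv.Perm.mul_apply]
  constructor
  · rintro ⟨i, rfl⟩
    have key : σ3 ^ i = σ3 ^ (i % 3) := by
      conv_lhs => rw [← Int.emod_add_mul_ediv i 3]
      rw [zpow_add, zpow_mul]
      have : σ3 ^ (3:ℤ) = 1 := by rw [show (3:ℤ) = ((3:ℕ):ℤ) by norm_num, zpow_natCast, h3]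
      rw [this, one_zpow, mul_one]
    have hlt : i % 3 = 0 ∨ i % 3 = 1 ∨ i % 3 = 2 := by omega
    rw [key]
    rcases hlt with h | h | h <;> rw [h]
    · left; simp
    · right; left; simp
    · right; right; rw [h2]
  · rintro (rfl | rfl | rfl)
    · exact ⟨0, by simp⟩
    · exact ⟨1, by simp⟩
    · exact ⟨2, h2 x⟩



/-- `T` is a triangle for `σ₃`: an orbit of `σ₃` (a set of the form
`{v, σ₃ v, σ₃ (σ₃ v)}` when `σ₃` has order 3 without fixed points). -/
def IsTriangle {n : ℕ} (σ3 : Equiv.Perm (Fin n)) (T : Set (Fin n)) : Prop :=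
  ∃ v : Fin n, T = {w : Fin n | σ3.SameCycle v w}

/-- Some orbit of `σ₃ ∘ σ₂` meets every triangle of `I` in exactly one point and meets no
triangle outside `I` (a simple `ab`-cycle visiting exactly the triangles of `I`). -/
def HasSimpleCycleOn {n : ℕ} (σ3 σ2 : Equiv.Perm (Fin n)) (I : Set (Set (Fin n))) : Prop :=
  ∃ v : Fin n, ∀ T : Set (Fin n), IsTriangle σ3 T →
    (T ∈ I → ∃! x : Fin n, x ∈ T ∧ (σ3 * σ2).SameCycle v x) ∧
    (T ∉ I → ∀ x ∈ T, ¬ (σ3 * σ2).SameCycle v x)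

/-- If each of the pairwise distinct sets of triangles `J₁, …, J_k` (of cardinality at
least 2) is visited by a simple `ab`-cycle of `(σ₂, σ₃)`, and `t_j` is the number of
triangles belonging to exactly `j` of the sets `Jᵢ`, then `t₂ + t₃` is even. -/
theorem stmt13 {n : ℕ} (hn : 0 < n) (h6 : 6 ∣ n)
    (σ3 : Equiv.Perm (Fin n)) (hσ3 : orderOf σ3 = 3) (hσ3' : ∀ v, σ3 v ≠ v)
    (σ2 : Equiv.Perm (Fin n)) (hσ2 : ∀ v, σ2 v ≠ v ∧ σ2 (σ2 v) = v)
    (k : ℕ) (J : Fin k → Set (Set (Fin n)))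
    (hJdist : Function.Injective J)
    (hJtri : ∀ i, ∀ T ∈ J i, IsTriangle σ3 T)
    (hJcard : ∀ i, 2 ≤ (J i).ncard)
    (hJcyc : ∀ i, HasSimpleCycleOn σ3 σ2 (J i)) :
    Even (Nat.card {T : Set (Fin n) //
        IsTriangle σ3 T ∧ Nat.card {i : Fin k // T ∈ J i} = 2} +
      Nat.card {T : Set (Fin n) //
        IsTriangle σ3 T ∧ Nat.card {i : Fin k // T ∈ J i} = 3}) := by
  classical
  have h3 : σ3 ^ 3 = 1 := by rw [← hσ3]; exact pow_orderOf_eq_one σ3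
  have tri : ∀ x w : Fin n, σ3.SameCycle x w ↔ w = x ∨ w = σ3 x ∨ w = σ3 (σ3 x) :=
    sameCycle_iff_of_pow_three h3
  have hcyc3 : ∀ x : Fin n, σ3 (σ3 (σ3 x)) = x := by
    intro x
    have : (σ3 ^ 3) x = x := by rw [h3]; rfl
    simpa [pow_succ, Equiv.Perm.mul_apply] using this
  have hdist : ∀ x : Fin n, x ≠ σ3 x ∧ x ≠ σ3 (σ3 x) ∧ σ3 x ≠ σ3 (σ3 x) := by
    intro x
    have h1 : σ3 x ≠ x := hσ3' x
    have h2 : σ3 (σ3 x) ≠ σ3 x := hσ3' _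
    refine ⟨h1.symm, ?_, h2.symm⟩
    intro h
    have := congrArg σ3 h
    rw [hcyc3 x] at this
    exact h1 this
  choose v hv using hJcyc
  set inS : Fin n → Prop := fun x => ∃ i, (σ3 * σ2).SameCycle (v i) x with hinS
  have hTtri : ∀ x : Fin n, IsTriangle σ3 {w | σ3.SameCycle x w} := fun x => ⟨x, rfl⟩
  -- membership characterization
  have memJ : ∀ (i : Fin k) (x : Fin n),
      {w | σ3.SameCycle x w} ∈ J i ↔
        ∃ w, σ3.SameCycle x w ∧ (σ3 * σ2).SameCycle (v i) w := by
    intro i x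
    constructor
    · intro h
      obtain ⟨w, ⟨hw1, hw2⟩, _⟩ := (hv i _ (hTtri x)).1 h
      exact ⟨w, hw1, hw2⟩
    · rintro ⟨w, hw1, hw2⟩
      by_contra h
      exact (hv i _ (hTtri x)).2 h w hw1 hw2
  -- orbits are disjoint
  have disj : ∀ (i j : Fin k) (w : Fin n),
      (σ3 * σ2).SameCycle (v i) w → (σ3 * σ2).SameCycle (v j) w → i = j := by
    have main : ∀ (i j : Fin k) (w : Fin n),
        (σ3 * σ2).SameCycle (v i) w → (σ3 * σ2).SameCycle (v j) w →
        ∀ T ∈ J i, T ∈ J j := by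
      intro i j w hi hj T hT
      obtain ⟨y, hy⟩ := hJtri i T hT
      subst hy
      obtain ⟨u, hu1, hu2⟩ := (memJ i y).1 hT
      exact (memJ j y).2 ⟨u, hu1, hj.trans (hi.symm.trans hu2)⟩
    intro i j w hi hj
    apply hJdist
    ext T
    exact ⟨fun h => main i j w hi hj T h, fun h => main j i w hj hi T h⟩
  -- counting indices = counting orbit points in the triangle
  have key : ∀ x : Fin n,
      Nat.card {i : Fin k // {w | σ3.SameCycle x w} ∈ J i} =
        ((if inS x then 1 else 0) + (if inS (σ3 x) then 1 else 0)
          + (if inS (σ3 (σ3 x)) then 1 else 0) : ℕ) := by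
    intro x
    have e1 : Nat.card {i : Fin k // {w | σ3.SameCycle x w} ∈ J i}
        = Nat.card {w : Fin n // σ3.SameCycle x w ∧ inS w} := by
      apply Nat.card_eq_of_bijective
        (fun i => ⟨((hv i.1 _ (hTtri x)).1 i.2).choose,
          ((hv i.1 _ (hTtri x)).1 i.2).choose_spec.1.1,
          ⟨i.1, ((hv i.1 _ (hTtri x)).1 i.2).choose_spec.1.2⟩⟩)
      constructor
      · rintro ⟨i, hi⟩ ⟨j, hj⟩ h
        simp only [Subtype.mk.injEq] at h ⊢
        have h1 := ((hv i _ (hTtri x)).1 hi).choose_spec.1.2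
        have h2 := ((hv j _ (hTtri x)).1 hj).choose_spec.1.2
        rw [← h] at h2
        exact disj i j _ h1 h2
      · rintro ⟨w, hw, i, hiw⟩
        have hmem : {w | σ3.SameCycle x w} ∈ J i := (memJ i x).2 ⟨w, hw, hiw⟩
        refine ⟨⟨i, hmem⟩, ?_⟩
        simp only [Subtype.mk.injEq]
        exact (((hv i _ (hTtri x)).1 hmem).choose_spec.2 w ⟨hw, hiw⟩).symm
    rw [e1, Nat.card_eq_fintype_card, Fintype.card_subtype]
    have hset : (Finset.univ.filter (fun w => σ3.SameCycle x w ∧ inS w))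
        = ({x, σ3 x, σ3 (σ3 x)} : Finset (Fin n)).filter inS := by
      ext w
      simp only [Finset.mem_filter, Finset.mem_univ, true_and, Finset.mem_insert,
        Finset.mem_singleton, tri x w]
    rw [hset]
    obtain ⟨hab, hac, hbc⟩ := hdist x
    rw [Finset.card_filter, Finset.sum_insert (by simp [hab, hac]),
      Finset.sum_insert (by simp [hbc]), Finset.sum_singleton]
    ring
  -- the finset D
  set D : Finset (Fin n) := Finset.univ.filter (fun x => inS x ∧ inS (σ3 x)) with hD
  have hDeven : Even D.card := by
    apply even_card_of_invol σ2
    intro x hx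
    simp only [hD, Finset.mem_filter, Finset.mem_univ, true_and] at hx ⊢
    obtain ⟨hxS, hx3S⟩ := hx
    refine ⟨⟨?_, ?_⟩, (hσ2 x).2, (hσ2 x).1⟩
    · -- inS (σ2 x)
      obtain ⟨i, hi⟩ := hx3S
      refine ⟨i, ?_⟩
      have : (σ3 * σ2)⁻¹ (σ3 x) = σ2 x := by
        rw [Equiv.Perm.inv_eq_iff_eq]
        simp [Equiv.Perm.mul_apply, (hσ2 x).2]
      rw [← this]
      exact Equiv.Perm.SameCycle.symm_apply_right hi
    · -- inS (σ3 (σ2 x))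
      obtain ⟨i, hi⟩ := hxS
      refine ⟨i, ?_⟩
      have : (σ3 * σ2) x = σ3 (σ2 x) := rfl
      rw [← this]
      exact Equiv.Perm.SameCycle.apply_right hi
  -- fiberwise count of D over triangles
  have hfib : D.card = ∑ T ∈ Finset.univ.filter (fun T => IsTriangle σ3 T),
      (D.filter (fun x => {w | σ3.SameCycle x w} = T)).card :=
    Finset.card_eq_sum_card_fiberwise (fun x _ => by
      simp only [Finset.mem_coe, Finset.mem_filter, Finset.mem_univ, true_and]
      exact hTtri x)
  have hper : ∀ T ∈ Finset.univ.filter (fun T => IsTriangle σ3 T),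
      (D.filter (fun x => {w | σ3.SameCycle x w} = T)).card
      = (if Nat.card {i : Fin k // T ∈ J i} = 2 then 1 else 0)
        + (if Nat.card {i : Fin k // T ∈ J i} = 3 then 3 else 0) := by
    intro T hT
    obtain ⟨x, rfl⟩ := (Finset.mem_filter.mp hT).2
    have hTeq : ∀ w : Fin n,
        ({u | σ3.SameCycle w u} = {u | σ3.SameCycle x u}) ↔ σ3.SameCycle x w := by
      intro w
      constructor
      · intro h
        have : w ∈ {u | σ3.SameCycle w u} := Equiv.Perm.SameCycle.refl _ _
        rw [h] at this
        exact this
      · intro h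
        ext u
        simp only [Set.mem_setOf_eq]
        exact ⟨fun h' => h.trans h', fun h' => h.symm.trans h'⟩
    have hfil : D.filter (fun w => {u | σ3.SameCycle w u} = {u | σ3.SameCycle x u})
        = ({x, σ3 x, σ3 (σ3 x)} : Finset (Fin n)).filter (fun w => inS w ∧ inS (σ3 w)) := by
      ext w
      simp only [hD, Finset.mem_filter, Finset.mem_univ, true_and, Finset.mem_insert,
        Finset.mem_singleton, hTeq w, tri x w]
      tauto
    obtain ⟨hab, hac, hbc⟩ := hdist x
    rw [hfil, key x, Finset.card_filter, Finset.sum_insert (by simp [hab, hac]),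
      Finset.sum_insert (by simp [hbc]), Finset.sum_singleton]
    by_cases ha : inS x <;> by_cases hb : inS (σ3 x) <;> by_cases hc : inS (σ3 (σ3 x)) <;>
      simp [ha, hb, hc, hcyc3 x]
  have hsum : D.card
      = ((Finset.univ.filter (fun T => IsTriangle σ3 T)).filter
          (fun T => Nat.card {i : Fin k // T ∈ J i} = 2)).card
        + 3 * ((Finset.univ.filter (fun T => IsTriangle σ3 T)).filter
          (fun T => Nat.card {i : Fin k // T ∈ J i} = 3)).card := by
    rw [hfib, Finset.sum_congr rfl hper, Finset.sum_add_distrib]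
    congr 1
    · rw [Finset.card_filter]
    · rw [Finset.card_filter, Finset.mul_sum]
      apply Finset.sum_congr rfl
      intro T _
      split_ifs <;> ring
  have hcard : ∀ m : ℕ,
      Nat.card {T : Set (Fin n) // IsTriangle σ3 T ∧ Nat.card {i : Fin k // T ∈ J i} = m}
      = ((Finset.univ.filter (fun T => IsTriangle σ3 T)).filter
          (fun T => Nat.card {i : Fin k // T ∈ J i} = m)).card := by
    intro m
    rw [Nat.card_eq_fintype_card, Fintype.card_subtype, Finset.filter_filter]
  rw [hcard 2, hcard 3]
  obtain ⟨p, hp⟩ := hDeven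
  rw [hsum] at hp
  exact ⟨p - ((Finset.univ.filter (fun T => IsTriangle σ3 T)).filter
    (fun T => Nat.card {i : Fin k // T ∈ J i} = 3)).card, by omega⟩
end
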